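/- arXiv:1601.03353 — 5 statements merged into one kernel-verified Lean document; each statement's English description precedes it below -/
import Mathlib

section
/- Let φ be a holomorphic self-map of 𝔻 whose iterates φ^n converge to a point z₀ ∈ ∂𝔻 uniformly on the compact subsets of 𝔻 (φ has a boundary Denjoy–Wolff point). Then the composition operator C_φ : H^∞(𝔻) → H^∞(𝔻) is not mean ergodic (in particular it is not uniformly mean ergodic). -/
open Metric Set Filter Complex
open scoped Topology Classical

noncomputable section

/-- Membership in the disc algebra `A(𝔻)`: continuous on the closed unit disc and
holomorphic on the open unit disc. -/
def IsDiscAlg (f : ℂ → ℂ) : Prop :=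
  ContinuousOn f (closedBall (0:ℂ) 1) ∧ DifferentiableOn ℂ f (ball (0:ℂ) 1)

/-- Membership in `H^∞(𝔻)`: bounded and holomorphic on the open unit disc. -/
def IsHInf (f : ℂ → ℂ) : Prop :=
  DifferentiableOn ℂ f (ball (0:ℂ) 1) ∧ ∃ M : ℝ, ∀ z ∈ ball (0:ℂ) 1, ‖f z‖ ≤ M

/-- The Cesàro means `(C_φ)_[n] f = (1/n) ∑_{m=1}^n f ∘ φ^m` of the composition
operator `C_φ f = f ∘ φ`. -/
def cesaro (φ f : ℂ → ℂ) (n : ℕ) (z : ℂ) : ℂ :=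
  (n : ℂ)⁻¹ * ∑ m ∈ Finset.Icc 1 n, f (φ^[m] z)

/-- `C_φ` is mean ergodic on `A(𝔻)`: for each `f ∈ A(𝔻)` the Cesàro means converge
in the sup norm on the closed disc. -/
def MeanErgodicDiscAlg (φ : ℂ → ℂ) : Prop :=
  ∀ f : ℂ → ℂ, IsDiscAlg f →
    ∃ g : ℂ → ℂ, TendstoUniformlyOn (cesaro φ f) g atTop (closedBall (0:ℂ) 1)

/-- `C_φ` is uniformly mean ergodic on `A(𝔻)`: the Cesàro means converge in operator
norm, i.e. uniformly over the unit ball of `A(𝔻)`. -/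
def UnifMeanErgodicDiscAlg (φ : ℂ → ℂ) : Prop :=
  ∃ P : (ℂ → ℂ) → ℂ → ℂ, ∀ ε > (0:ℝ), ∃ N : ℕ, ∀ n ≥ N,
    ∀ f : ℂ → ℂ, IsDiscAlg f → (∀ z ∈ closedBall (0:ℂ) 1, ‖f z‖ ≤ 1) →
      ∀ z ∈ closedBall (0:ℂ) 1, ‖cesaro φ f n z - P f z‖ ≤ ε

/-- `C_φ` is mean ergodic on `H^∞(𝔻)`: for each `f ∈ H^∞(𝔻)` the Cesàro means converge
in the sup norm on the open disc. -/
def MeanErgodicHInf (φ : ℂ → ℂ) : Prop :=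
  ∀ f : ℂ → ℂ, IsHInf f →
    ∃ g : ℂ → ℂ, TendstoUniformlyOn (cesaro φ f) g atTop (ball (0:ℂ) 1)

/-- `C_φ` is uniformly mean ergodic on `H^∞(𝔻)`: the Cesàro means converge in operator
norm, i.e. uniformly over the unit ball of `H^∞(𝔻)`. -/
def UnifMeanErgodicHInf (φ : ℂ → ℂ) : Prop :=
  ∃ P : (ℂ → ℂ) → ℂ → ℂ, ∀ ε > (0:ℝ), ∃ N : ℕ, ∀ n ≥ N,
    ∀ f : ℂ → ℂ, IsHInf f → (∀ z ∈ ball (0:ℂ) 1, ‖f z‖ ≤ 1) →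
      ∀ z ∈ ball (0:ℂ) 1, ‖cesaro φ f n z - P f z‖ ≤ ε

/-- `φ` is an automorphism (biholomorphic self-map) of the open unit disc. -/
def IsDiscAutomorphism (φ : ℂ → ℂ) : Prop :=
  DifferentiableOn ℂ φ (ball (0:ℂ) 1) ∧ MapsTo φ (ball (0:ℂ) 1) (ball (0:ℂ) 1) ∧
  ∃ ψ : ℂ → ℂ, DifferentiableOn ℂ ψ (ball (0:ℂ) 1) ∧
    MapsTo ψ (ball (0:ℂ) 1) (ball (0:ℂ) 1) ∧
    (∀ z ∈ ball (0:ℂ) 1, ψ (φ z) = z) ∧ ∀ z ∈ ball (0:ℂ) 1, φ (ψ z) = z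

/-- An elliptic automorphism of the disc: an automorphism with a fixed point in `𝔻`. -/
def IsEllipticAutomorphism (φ : ℂ → ℂ) : Prop :=
  IsDiscAutomorphism φ ∧ ∃ z ∈ ball (0:ℂ) 1, φ z = z

/-- A hyperbolic automorphism of the disc: an automorphism with exactly two fixed
points, both on the unit circle. -/
def IsHyperbolicAutomorphism (φ : ℂ → ℂ) : Prop :=
  IsDiscAutomorphism φ ∧ ∃ p q : ℂ, p ≠ q ∧ ‖p‖ = 1 ∧ ‖q‖ = 1 ∧ φ p = p ∧ φ q = q ∧
    ∀ z ∈ closedBall (0:ℂ) 1, φ z = z → z = p ∨ z = q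

/-- A parabolic automorphism of the disc: an automorphism with exactly one fixed
point, lying on the unit circle. -/
def IsParabolicAutomorphism (φ : ℂ → ℂ) : Prop :=
  IsDiscAutomorphism φ ∧ ∃ p : ℂ, ‖p‖ = 1 ∧ φ p = p ∧
    ∀ z ∈ closedBall (0:ℂ) 1, φ z = z → z = p

/-- A set `J ⊆ ℕ` has density one: `#(J ∩ [0,N]) / N → 1` as `N → ∞`. -/
def HasDensityOne (J : Set ℕ) : Prop :=
  Tendsto (fun N : ℕ => (((Finset.range (N + 1)).filter (fun n => n ∈ J)).card : ℝ) / N)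
    atTop (𝓝 1)

/-- A typical weight on `𝔻`: continuous, strictly positive, bounded, radial,
non-increasing in `|z|`, and tending to `0` as `|z| → 1`. -/
def IsTypicalWeight (v : ℂ → ℝ) : Prop :=
  ContinuousOn v (ball (0:ℂ) 1) ∧ (∀ z ∈ ball (0:ℂ) 1, 0 < v z) ∧
  (∃ M : ℝ, ∀ z ∈ ball (0:ℂ) 1, v z ≤ M) ∧
  (∀ z ∈ ball (0:ℂ) 1, ∀ w ∈ ball (0:ℂ) 1, ‖z‖ = ‖w‖ → v z = v w) ∧
  (∀ z ∈ ball (0:ℂ) 1, ∀ w ∈ ball (0:ℂ) 1, ‖z‖ ≤ ‖w‖ → v w ≤ v z) ∧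
  (∀ ε > (0:ℝ), ∃ r : ℝ, r < 1 ∧ ∀ z ∈ ball (0:ℂ) 1, r ≤ ‖z‖ → v z < ε)

/-- Membership in the weighted space `H_v^∞`. -/
def IsHvInf (v : ℂ → ℝ) (f : ℂ → ℂ) : Prop :=
  DifferentiableOn ℂ f (ball (0:ℂ) 1) ∧ ∃ M : ℝ, ∀ z ∈ ball (0:ℂ) 1, v z * ‖f z‖ ≤ M

/-- Membership in the weighted space `H_v^0`. -/
def IsHv0 (v : ℂ → ℝ) (f : ℂ → ℂ) : Prop :=
  IsHvInf v f ∧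
  ∀ ε > (0:ℝ), ∃ r : ℝ, r < 1 ∧ ∀ z ∈ ball (0:ℂ) 1, r ≤ ‖z‖ → v z * ‖f z‖ < ε


/-- Möbius map of the disc. -/
def mob (a z : ℂ) : ℂ := (a - z) / (1 - (starRingEnd ℂ) a * z)

lemma mob_denom_ne {a z : ℂ} (ha : ‖a‖ < 1) (hz : ‖z‖ < 1) :
    1 - (starRingEnd ℂ) a * z ≠ 0 := by
  intro h
  have : ‖(starRingEnd ℂ) a * z‖ < 1 := by
    rw [norm_mul, RCLike.norm_conj]
    nlinarith [norm_nonneg a, norm_nonneg z]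
  have h1 : (1 : ℂ) = (starRingEnd ℂ) a * z := sub_eq_zero.mp h
  rw [← h1] at this; simp at this

lemma mob_sq_identity (a z : ℂ) :
    ‖1 - (starRingEnd ℂ) a * z‖ ^ 2 - ‖a - z‖ ^ 2 = (1 - ‖a‖ ^ 2) * (1 - ‖z‖ ^ 2) := by
  have h1 : ‖1 - (starRingEnd ℂ) a * z‖ ^ 2 = Complex.normSq (1 - (starRingEnd ℂ) a * z) := by
    rw [← Complex.sq_norm]
  have h2 : ‖a - z‖ ^ 2 = Complex.normSq (a - z) := by rw [← Complex.sq_norm]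
  have h3 : ‖a‖ ^ 2 = Complex.normSq a := by rw [← Complex.sq_norm]
  have h4 : ‖z‖ ^ 2 = Complex.normSq z := by rw [← Complex.sq_norm]
  rw [h1, h2, h3, h4]
  simp only [Complex.normSq_apply, Complex.sub_re, Complex.sub_im, Complex.mul_re,
    Complex.mul_im, Complex.conj_re, Complex.conj_im, Complex.one_re, Complex.one_im]
  ring

lemma mob_mem {a z : ℂ} (ha : ‖a‖ < 1) (hz : ‖z‖ < 1) : ‖mob a z‖ < 1 := by
  have hd := mob_denom_ne ha hz
  have hdpos : 0 < ‖1 - (starRingEnd ℂ) a * z‖ := norm_pos_iff.2 hd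
  have hid := mob_sq_identity a z
  have p1 : 0 < 1 - ‖a‖ ^ 2 := by nlinarith [norm_nonneg a]
  have p2 : 0 < 1 - ‖z‖ ^ 2 := by nlinarith [norm_nonneg z]
  have hlt : ‖a - z‖ ^ 2 < ‖1 - (starRingEnd ℂ) a * z‖ ^ 2 := by
    nlinarith [mul_pos p1 p2]
  rw [mob, norm_div, div_lt_one hdpos]
  nlinarith [norm_nonneg (a - z)]

lemma mob_self (a : ℂ) : mob a a = 0 := by simp [mob]

lemma mob_zero (a : ℂ) : mob a 0 = a := by simp [mob]

lemma mob_denom_mob {a z : ℂ} (ha : ‖a‖ < 1) (hz : ‖z‖ < 1) :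
    1 - (starRingEnd ℂ) a * mob a z =
      (1 - Complex.normSq a) / (1 - (starRingEnd ℂ) a * z) := by
  have hd := mob_denom_ne ha hz
  rw [mob]
  field_simp
  rw [Complex.normSq_eq_conj_mul_self]
  ring

lemma mob_invol {a z : ℂ} (ha : ‖a‖ < 1) (hz : ‖z‖ < 1) : mob a (mob a z) = z := by
  have hd := mob_denom_ne ha hz
  have hns : (1 : ℂ) - Complex.normSq a ≠ 0 := by
    have hlt : Complex.normSq a < 1 := by
      rw [← Complex.sq_norm]
      have hn : ‖a‖ < 1 := ha
      nlinarith [norm_nonneg a]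
    have h2 : ((1 - Complex.normSq a : ℝ) : ℂ) ≠ 0 := by
      rw [Complex.ofReal_ne_zero]; linarith
    convert h2 using 1; push_cast; ring
  rw [mob, mob_denom_mob ha hz, mob]
  have hd' : 1 - z * (starRingEnd ℂ) a ≠ 0 := by rwa [mul_comm]
  field_simp
  rw [Complex.normSq_eq_conj_mul_self]
  ring

lemma mob_differentiableAt {a z : ℂ} (ha : ‖a‖ < 1) (hz : ‖z‖ < 1) :
    DifferentiableAt ℂ (mob a) z := by
  apply DifferentiableAt.div
  · fun_prop
  · fun_prop
  · exact mob_denom_ne ha hz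

/-- Schwarz–Pick lemma. -/
lemma schwarz_pick {F : ℂ → ℂ} (hd : DifferentiableOn ℂ F (ball (0:ℂ) 1))
    (hm : MapsTo F (ball (0:ℂ) 1) (ball (0:ℂ) 1)) {a b : ℂ}
    (ha : a ∈ ball (0:ℂ) 1) (hb : b ∈ ball (0:ℂ) 1) :
    ‖mob (F a) (F b)‖ ≤ ‖mob a b‖ := by
  have hball : ∀ w : ℂ, w ∈ ball (0:ℂ) 1 ↔ ‖w‖ < 1 := fun w => mem_ball_zero_iff
  have ha' : ‖a‖ < 1 := (hball a).1 ha
  have hb' : ‖b‖ < 1 := (hball b).1 hb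
  have hFa : ‖F a‖ < 1 := (hball _).1 (hm ha)
  set G : ℂ → ℂ := fun w => mob (F a) (F (mob a w)) with hG
  have hmem : ∀ w : ℂ, ‖w‖ < 1 → ‖mob a w‖ < 1 := fun w hw => mob_mem ha' hw
  have hGd : DifferentiableOn ℂ G (ball (0:ℂ) 1) := by
    intro w hw
    have hw' : ‖w‖ < 1 := (hball w).1 hw
    have h1 : ‖mob a w‖ < 1 := hmem w hw'
    have h2 : ‖F (mob a w)‖ < 1 := (hball _).1 (hm ((hball _).2 h1))
    apply DifferentiableAt.differentiableWithinAt
    exact (mob_differentiableAt hFa h2).comp w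
      (((hd.differentiableAt (isOpen_ball.mem_nhds ((hball _).2 h1))).comp w
        (mob_differentiableAt ha' hw')))
  have hGm : MapsTo G (ball (0:ℂ) 1) (ball (0:ℂ) 1) := by
    intro w hw
    have hw' : ‖w‖ < 1 := (hball w).1 hw
    have h1 : ‖mob a w‖ < 1 := hmem w hw'
    have h2 : ‖F (mob a w)‖ < 1 := (hball _).1 (hm ((hball _).2 h1))
    exact (hball _).2 (mob_mem hFa h2)
  have hG0 : G 0 = 0 := by
    rw [hG]; simp only [mob_zero, mob_self]
  have hw : ‖mob a b‖ < 1 := by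
    simpa using mob_mem ha' hb'
  have := norm_le_norm_of_mapsTo_ball hGd (hGm.mono_right ball_subset_closedBall) hG0 (z := mob a b) (by
    simpa using mob_mem ha' hb')
  have hGw : G (mob a b) = mob (F a) (F b) := by
    simp only [hG, mob_invol ha' hb']
  rw [hGw] at this
  simpa using this

set_option maxHeartbeats 1000000 in
lemma ratio_real {δ A B D E Za Zb : ℝ} (hδ1 : 1/2 ≤ δ) (hδ2 : δ < 1)
    (hA0 : 0 ≤ A) (hA : A < 1) (hB0 : 0 ≤ B) (hB : B < 1) (hE : 0 ≤ E) (hD : 0 ≤ D)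
    (hZa : 0 ≤ Za) (hZb : 0 ≤ Zb)
    (hid : D^2 - E^2 = (1 - A^2) * (1 - B^2))
    (h : E ≤ δ * D) (hstep1 : D ≤ (1 - A^2) + E) (hge : 1 - A ≤ D)
    (h1za : 1 - A ≤ Za) (hlow : 1 - B ≤ Zb)
    (htri1 : Zb ≤ Za + E) (htri2 : Za - E ≤ Zb) :
    (min (1/2) ((1 - δ^2) * (1-δ) / (16 * δ))) * Za ≤ Zb ∧
      Zb ≤ (1 + 2*δ/(1-δ)) * Za := by
  have hδ0 : 0 < δ := by linarith
  have h1δ : 0 < 1 - δ := by linarith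
  set K : ℝ := 2*δ/(1-δ) with hK
  have hK2 : 2 ≤ K := by rw [hK, le_div_iff₀ h1δ]; linarith
  have hKpos : 0 < K := by linarith
  have h1a0 : 0 < 1 - A := by linarith
  -- E ≤ K (1-A)
  have hstep2 : E ≤ K * (1 - A) := by
    have m1 : δ * E ≤ δ * (δ * D) := mul_le_mul_of_nonneg_left h hδ0.le
    have m2 : δ * D ≤ δ * ((1 - A^2) + E) := mul_le_mul_of_nonneg_left hstep1 hδ0.le
    have m3 : (1:ℝ) - A^2 ≤ 2*(1-A) := by nlinarith
    have m4 : δ * ((1 - A^2) + E) ≤ δ * (2*(1-A) + E) := by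
      apply mul_le_mul_of_nonneg_left _ hδ0.le; linarith
    have e1 : E * (1-δ) ≤ δ * (2*(1-A)) := by nlinarith [h.trans (m2.trans m4)]
    rw [hK, div_mul_eq_mul_div, le_div_iff₀ h1δ]
    nlinarith [e1]
  -- (1-δ²)/4 (1-A) ≤ 1-B
  have hstep6 : (1 - δ^2)/4 * (1 - A) ≤ 1 - B := by
    have hδsq : (0:ℝ) ≤ 1 - δ^2 := by nlinarith
    have hE2 : E^2 ≤ δ^2 * D^2 := by
      have := pow_le_pow_left₀ hE h 2
      calc E^2 ≤ (δ*D)^2 := this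
        _ = δ^2 * D^2 := by ring
    have hsq : (1 - δ^2) * D^2 ≤ (1 - A^2) * (1 - B^2) := by nlinarith [hE2]
    have hD2 : (1-A)^2 ≤ D^2 := pow_le_pow_left₀ h1a0.le hge 2
    have hbb : (1 - δ^2) * (1-A)^2 ≤ (1 - A^2) * (1 - B^2) :=
      (mul_le_mul_of_nonneg_left hD2 hδsq).trans hsq
    have hprod : (1 - A^2) * (1 - B^2) ≤ (2*(1-A)) * (2*(1-B)) := by
      have p1 : (1:ℝ) - A^2 ≤ 2*(1-A) := by nlinarith
      have p2 : (1:ℝ) - B^2 ≤ 2*(1-B) := by nlinarith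
      have p3 : (0:ℝ) ≤ 1 - B^2 := by nlinarith
      have p4 : (0:ℝ) ≤ 2*(1-A) := by linarith
      exact mul_le_mul p1 p2 p3 p4
    have hcomb := hbb.trans hprod
    have hfin : ((1 - δ^2) * (1-A)) * (1-A) ≤ (4 * (1-B)) * (1-A) := by
      calc ((1 - δ^2) * (1-A)) * (1-A) = (1 - δ^2) * (1-A)^2 := by ring
        _ ≤ (2*(1-A)) * (2*(1-B)) := hcomb
        _ = (4 * (1-B)) * (1-A) := by ring
    have := le_of_mul_le_mul_right hfin h1a0
    linarith
  constructor
  · -- lower bound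
    set c₂ : ℝ := min (1/2) ((1 - δ^2) * (1-δ) / (16 * δ)) with hc₂
    have hc₂pos : 0 < c₂ := by
      rw [hc₂]
      have h1 : (0:ℝ) < 1 - δ^2 := by nlinarith
      have : 0 < (1 - δ^2) * (1-δ) / (16 * δ) :=
        div_pos (mul_pos h1 h1δ) (by linarith)
      exact lt_min (by norm_num) this
    have hc₂K : c₂ ≤ (1 - δ^2)/(8*K) := by
      have hd1 : (0:ℝ) < 8*(2*δ/(1-δ)) := by
        have := div_pos (by linarith : (0:ℝ) < 2*δ) h1δ; linarith
      have hd2 : (0:ℝ) < 16*δ := by linarith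
      have heq : (1 - δ^2) * (1-δ) / (16 * δ) = (1 - δ^2)/(8*K) := by
        rw [hK, div_eq_div_iff hd2.ne' hd1.ne']
        field_simp
        ring
      rw [hc₂, ← heq]; exact min_le_right _ _
    have hc₂half : c₂ ≤ 1/2 := min_le_left _ _
    by_cases hcase : 2 * K * (1 - A) ≤ Za
    · have h1 : c₂ * Za ≤ Za / 2 := by
        have := mul_le_mul_of_nonneg_right hc₂half hZa
        linarith
      linarith [hstep2, htri2]
    · push_neg at hcase
      have h1 : c₂ * Za ≤ c₂ * (2 * K * (1 - A)) :=
        mul_le_mul_of_nonneg_left hcase.le hc₂pos.le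
      have h2 : c₂ * (2 * K * (1 - A)) ≤ ((1 - δ^2)/(8*K)) * (2 * K * (1 - A)) := by
        have hpos : 0 ≤ 2 * K * (1 - A) := by nlinarith
        exact mul_le_mul_of_nonneg_right hc₂K hpos
      have h3 : ((1 - δ^2)/(8*K)) * (2 * K * (1 - A)) = (1 - δ^2)/4 * (1-A) := by
        field_simp; ring
      linarith
  · -- upper bound
    have h1 : Zb ≤ Za + K*(1-A) := by linarith
    have h2 : K*(1-A) ≤ K * Za := mul_le_mul_of_nonneg_left h1za hKpos.le
    nlinarith

/-- If `a, b ∈ 𝔻` are at pseudo-hyperbolic distance at most `δ`, the distances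
to a boundary point `z₀` are comparable. -/
lemma dist_ratio {a b z₀ : ℂ} {δ : ℝ} (hδ1 : 1/2 ≤ δ) (hδ2 : δ < 1)
    (ha : ‖a‖ < 1) (hb : ‖b‖ < 1) (hz₀ : ‖z₀‖ = 1)
    (h : ‖a - b‖ ≤ δ * ‖1 - (starRingEnd ℂ) a * b‖) :
    (min (1/2) ((1 - δ^2) * (1-δ) / (16 * δ))) * ‖z₀ - a‖ ≤ ‖z₀ - b‖ ∧
      ‖z₀ - b‖ ≤ (1 + 2*δ/(1-δ)) * ‖z₀ - a‖ := by
  have hid : ‖1 - (starRingEnd ℂ) a * b‖ ^ 2 - ‖a - b‖ ^ 2 = (1 - ‖a‖ ^ 2) * (1 - ‖b‖ ^ 2) := by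
    have h1 : ‖1 - (starRingEnd ℂ) a * b‖ ^ 2 = Complex.normSq (1 - (starRingEnd ℂ) a * b) := by
      rw [← Complex.sq_norm]
    have h2 : ‖a - b‖ ^ 2 = Complex.normSq (a - b) := by rw [← Complex.sq_norm]
    have h3 : ‖a‖ ^ 2 = Complex.normSq a := by rw [← Complex.sq_norm]
    have h4 : ‖b‖ ^ 2 = Complex.normSq b := by rw [← Complex.sq_norm]
    rw [h1, h2, h3, h4]
    simp only [Complex.normSq_apply, Complex.sub_re, Complex.sub_im, Complex.mul_re,
      Complex.mul_im, Complex.conj_re, Complex.conj_im, Complex.one_re, Complex.one_im]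
    ring
  have hstep1 : ‖1 - (starRingEnd ℂ) a * b‖ ≤ (1 - ‖a‖^2) + ‖a - b‖ := by
    have hdecomp : 1 - (starRingEnd ℂ) a * b =
        (1 - (starRingEnd ℂ) a * a) + (starRingEnd ℂ) a * (a - b) := by ring
    have h1 : (1 : ℂ) - (starRingEnd ℂ) a * a = ((1 - ‖a‖^2 : ℝ) : ℂ) := by
      rw [← Complex.normSq_eq_conj_mul_self]
      have hna : (Complex.normSq a : ℝ) = ‖a‖^2 := by rw [← Complex.sq_norm]
      rw [hna]; push_cast; ring
    calc ‖1 - (starRingEnd ℂ) a * b‖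
        ≤ ‖1 - (starRingEnd ℂ) a * a‖ + ‖(starRingEnd ℂ) a * (a - b)‖ := by
          rw [hdecomp]; exact norm_add_le _ _
      _ ≤ (1 - ‖a‖^2) + ‖a - b‖ := by
          rw [h1, norm_mul, RCLike.norm_conj]
          have habs : |1 - ‖a‖^2| = 1 - ‖a‖^2 := by
            rw [_root_.abs_of_nonneg]; nlinarith [norm_nonneg a]
          rw [Complex.norm_real, Real.norm_eq_abs, habs]
          nlinarith [norm_nonneg (a - b), norm_nonneg a]
  have hge : 1 - ‖a‖ ≤ ‖1 - (starRingEnd ℂ) a * b‖ := by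
    have := norm_sub_norm_le (1:ℂ) ((starRingEnd ℂ) a * b)
    rw [norm_one, norm_mul, RCLike.norm_conj] at this
    nlinarith [norm_nonneg a, norm_nonneg b]
  have h1za : 1 - ‖a‖ ≤ ‖z₀ - a‖ := by
    have := norm_sub_norm_le z₀ a; rw [hz₀] at this; linarith
  have hlow : 1 - ‖b‖ ≤ ‖z₀ - b‖ := by
    have := norm_sub_norm_le z₀ b; rw [hz₀] at this; linarith
  have htri1 : ‖z₀ - b‖ ≤ ‖z₀ - a‖ + ‖a - b‖ := by
    have := norm_add_le (z₀ - a) (a - b)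
    simpa [sub_add_sub_cancel] using this
  have htri2 : ‖z₀ - a‖ - ‖a - b‖ ≤ ‖z₀ - b‖ := by
    have h' := norm_add_le (z₀ - b) (b - a)
    rw [sub_add_sub_cancel] at h'
    rw [norm_sub_rev b a] at h'
    linarith
  exact ratio_real hδ1 hδ2 (norm_nonneg a) ha (norm_nonneg b) hb (norm_nonneg _)
    (norm_nonneg _) (norm_nonneg _) (norm_nonneg _) hid h hstep1 hge h1za hlow htri1 htri2

/-- The auxiliary "potential" `q(z) = 1 + log 2 - Log(1 - z·conj z₀)`. -/
def wq (z₀ z : ℂ) : ℂ :=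
  ((1 + Real.log 2 : ℝ) : ℂ) - Complex.log (1 - z * (starRingEnd ℂ) z₀)

/-- The witness function `f(z) = cos (Log (q z))`, a bounded holomorphic function on `𝔻`
which oscillates slowly along any orbit approaching the boundary point `z₀`. -/
def wit (z₀ z : ℂ) : ℂ := Complex.cos (Complex.log (wq z₀ z))

lemma u_re_pos {z₀ z : ℂ} (hz₀ : ‖z₀‖ = 1) (hz : ‖z‖ < 1) :
    1 - ‖z‖ ≤ (1 - z * (starRingEnd ℂ) z₀).re := by
  have h1 : (z * (starRingEnd ℂ) z₀).re ≤ ‖z * (starRingEnd ℂ) z₀‖ := by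
    exact Complex.re_le_norm _
  rw [norm_mul, RCLike.norm_conj, hz₀, mul_one] at h1
  simp only [Complex.sub_re, Complex.one_re]
  linarith

lemma u_norm_eq {z₀ z : ℂ} (hz₀ : ‖z₀‖ = 1) :
    ‖1 - z * (starRingEnd ℂ) z₀‖ = ‖z₀ - z‖ := by
  have h1 : z₀ * (starRingEnd ℂ) z₀ = 1 := by
    rw [Complex.mul_conj]
    have : Complex.normSq z₀ = 1 := by
      rw [← Complex.sq_norm, hz₀]; norm_num
    rw [this]; norm_num
  have h2 : (1 : ℂ) - z * (starRingEnd ℂ) z₀ = (z₀ - z) * (starRingEnd ℂ) z₀ := by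
    linear_combination -h1
  rw [h2, norm_mul, RCLike.norm_conj, hz₀, mul_one]

lemma u_norm_lt_two {z₀ z : ℂ} (hz₀ : ‖z₀‖ = 1) (hz : ‖z‖ < 1) :
    ‖1 - z * (starRingEnd ℂ) z₀‖ < 2 := by
  rw [u_norm_eq hz₀]
  calc ‖z₀ - z‖ ≤ ‖z₀‖ + ‖z‖ := norm_sub_le _ _
    _ < 2 := by rw [hz₀]; linarith

lemma u_norm_pos {z₀ z : ℂ} (hz₀ : ‖z₀‖ = 1) (hz : ‖z‖ < 1) :
    0 < ‖1 - z * (starRingEnd ℂ) z₀‖ := by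
  have := u_re_pos hz₀ hz
  have h2 : (1 - z * (starRingEnd ℂ) z₀).re ≤ ‖1 - z * (starRingEnd ℂ) z₀‖ := by
    exact Complex.re_le_norm _
  linarith

lemma wq_re {z₀ z : ℂ} (hz₀ : ‖z₀‖ = 1) (hz : ‖z‖ < 1) :
    (wq z₀ z).re = 1 + Real.log 2 - Real.log ‖z₀ - z‖ := by
  rw [wq, Complex.sub_re, Complex.ofReal_re, Complex.log_re,
    u_norm_eq hz₀]

lemma wq_re_ge_one {z₀ z : ℂ} (hz₀ : ‖z₀‖ = 1) (hz : ‖z‖ < 1) : 1 ≤ (wq z₀ z).re := by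
  rw [wq_re hz₀ hz]
  have h1 : Real.log ‖z₀ - z‖ ≤ Real.log 2 := by
    rcases eq_or_lt_of_le (norm_nonneg (z₀ - z)) with h | h
    · rw [← h, Real.log_zero]; positivity
    · apply Real.log_le_log h
      have := u_norm_lt_two hz₀ hz
      rw [u_norm_eq hz₀] at this
      linarith
  linarith

lemma wq_im_le {z₀ z : ℂ} (hz₀ : ‖z₀‖ = 1) (hz : ‖z‖ < 1) : |(wq z₀ z).im| ≤ Real.pi / 2 := by
  rw [wq]
  simp only [Complex.sub_im, Complex.ofReal_im, Complex.log_im, zero_sub, abs_neg]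
  rw [Complex.abs_arg_le_pi_div_two_iff]
  have := u_re_pos hz₀ hz
  linarith

lemma wq_abs_ge_one {z₀ z : ℂ} (hz₀ : ‖z₀‖ = 1) (hz : ‖z‖ < 1) : 1 ≤ ‖wq z₀ z‖ := by
  have h1 : (wq z₀ z).re ≤ ‖wq z₀ z‖ := by
    exact Complex.re_le_norm _
  linarith [wq_re_ge_one hz₀ hz]

lemma wq_slit {z₀ z : ℂ} (hz₀ : ‖z₀‖ = 1) (hz : ‖z‖ < 1) :
    wq z₀ z ∈ Complex.slitPlane :=
  Complex.mem_slitPlane_iff.2 (Or.inl (by linarith [wq_re_ge_one hz₀ hz]))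

lemma norm_cos_le_exp (w : ℂ) : ‖Complex.cos w‖ ≤ Real.exp |w.im| := by
  rw [Complex.cos]
  have h1 : ‖Complex.exp (w * Complex.I)‖ = Real.exp (-(w.im)) := by
    rw [Complex.norm_exp]
    congr 1
    simp [Complex.mul_re, Complex.I_re, Complex.I_im]
  have h2 : ‖Complex.exp (-w * Complex.I)‖ = Real.exp (w.im) := by
    rw [Complex.norm_exp]
    congr 1
    simp [Complex.mul_re, Complex.I_re, Complex.I_im]
  calc ‖(Complex.exp (w * Complex.I) + Complex.exp (-w * Complex.I)) / 2‖
      ≤ (‖Complex.exp (w * Complex.I)‖ + ‖Complex.exp (-w * Complex.I)‖) / 2 := by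
        rw [norm_div]
        simp only [Complex.norm_ofNat]
        gcongr
        exact norm_add_le _ _
    _ ≤ Real.exp |w.im| := by
        rw [h1, h2]
        have e1 : Real.exp (-(w.im)) ≤ Real.exp |w.im| := by
          apply Real.exp_le_exp.2; exact neg_le_abs _
        have e2 : Real.exp (w.im) ≤ Real.exp |w.im| := by
          apply Real.exp_le_exp.2; exact le_abs_self _
        linarith

lemma exp_two_le_eight : Real.exp 2 ≤ 8 := by
  have h := Real.exp_one_lt_d9
  have h2 : Real.exp 2 = Real.exp 1 * Real.exp 1 := by
    rw [← Real.exp_add]; norm_num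
  nlinarith [Real.exp_pos 1]

lemma wit_norm_le {z₀ z : ℂ} (hz₀ : ‖z₀‖ = 1) (hz : ‖z‖ < 1) : ‖wit z₀ z‖ ≤ 8 := by
  have him : |(Complex.log (wq z₀ z)).im| ≤ Real.pi / 2 := by
    rw [Complex.log_im, abs_arg_le_pi_div_two_iff]
    linarith [wq_re_ge_one hz₀ hz]
  calc ‖wit z₀ z‖ ≤ Real.exp |(Complex.log (wq z₀ z)).im| := norm_cos_le_exp _
    _ ≤ Real.exp 2 := by
        apply Real.exp_le_exp.2
        have := Real.pi_le_four
        linarith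
    _ ≤ 8 := exp_two_le_eight

lemma wit_differentiableAt {z₀ z : ℂ} (hz₀ : ‖z₀‖ = 1) (hz : ‖z‖ < 1) :
    DifferentiableAt ℂ (wit z₀) z := by
  have h1 : DifferentiableAt ℂ (fun w : ℂ => 1 - w * (starRingEnd ℂ) z₀) z := by
    apply DifferentiableAt.sub
    · exact differentiableAt_const _
    · exact differentiableAt_id.mul (differentiableAt_const _)
  have hu_slit : (1 - z * (starRingEnd ℂ) z₀) ∈ Complex.slitPlane := by
    apply Complex.mem_slitPlane_iff.2 (Or.inl _)
    linarith [u_re_pos hz₀ hz]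
  have h2 : DifferentiableAt ℂ (fun w : ℂ => Complex.log (1 - w * (starRingEnd ℂ) z₀)) z :=
    (Complex.differentiableAt_log hu_slit).comp (f := fun w : ℂ => 1 - w * (starRingEnd ℂ) z₀) z h1
  have h3 : DifferentiableAt ℂ (wq z₀) z := (differentiableAt_const _).sub h2
  have h4 : DifferentiableAt ℂ (fun w => Complex.log (wq z₀ w)) z :=
    (Complex.differentiableAt_log (wq_slit hz₀ hz)).comp z h3
  exact Complex.differentiable_cos.differentiableAt.comp z h4

lemma cos_diff_le (A : ℝ) (d : ℂ) (hd : ‖d‖ ≤ 1) :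
    ‖Complex.cos ((A : ℂ) + d) - Complex.cos (A : ℂ)‖ ≤ 4 * ‖d‖ := by
  have hsplit : Complex.cos ((A : ℂ) + d) - Complex.cos (A : ℂ)
      = Complex.cos A * (Complex.cos d - 1) - Complex.sin A * Complex.sin d := by
    rw [Complex.cos_add]; ring
  have hcosA : ‖Complex.cos (A : ℂ)‖ ≤ 1 := by
    rw [← Complex.ofReal_cos, Complex.norm_real, Real.norm_eq_abs]
    exact Real.abs_cos_le_one A
  have hsinA : ‖Complex.sin (A : ℂ)‖ ≤ 1 := by
    rw [← Complex.ofReal_sin, Complex.norm_real, Real.norm_eq_abs]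
    exact Real.abs_sin_le_one A
  have hdI : ‖d * Complex.I‖ ≤ 1 := by
    rw [norm_mul, Complex.norm_I, mul_one]; exact hd
  have hdI' : ‖-d * Complex.I‖ ≤ 1 := by
    rw [norm_mul, Complex.norm_I, mul_one, norm_neg]; exact hd
  have he1 := Complex.norm_exp_sub_one_le hdI
  have he2 := Complex.norm_exp_sub_one_le hdI'
  rw [norm_mul, Complex.norm_I, mul_one] at he1
  rw [norm_mul, Complex.norm_I, mul_one, norm_neg] at he2
  have hcos1 : ‖Complex.cos d - 1‖ ≤ 2 * ‖d‖ := by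
    have hid : Complex.cos d - 1 =
        ((Complex.exp (d * Complex.I) - 1) + (Complex.exp (-d * Complex.I) - 1)) / 2 := by
      rw [Complex.cos]; ring
    rw [hid, norm_div]
    simp only [Complex.norm_ofNat]
    have := norm_add_le (Complex.exp (d * Complex.I) - 1) (Complex.exp (-d * Complex.I) - 1)
    calc ‖Complex.exp (d * Complex.I) - 1 + (Complex.exp (-d * Complex.I) - 1)‖ / 2
        ≤ (‖Complex.exp (d * Complex.I) - 1‖ + ‖Complex.exp (-d * Complex.I) - 1‖) / 2 := by
          linarith
      _ ≤ 2 * ‖d‖ := by linarith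
  have hsin : ‖Complex.sin d‖ ≤ 2 * ‖d‖ := by
    have hid : Complex.sin d =
        ((Complex.exp (-d * Complex.I) - 1) - (Complex.exp (d * Complex.I) - 1))
          * Complex.I / 2 := by
      rw [Complex.sin]; ring
    rw [hid, norm_div, norm_mul, Complex.norm_I, mul_one]
    simp only [Complex.norm_ofNat]
    have := norm_sub_le (Complex.exp (-d * Complex.I) - 1) (Complex.exp (d * Complex.I) - 1)
    calc ‖Complex.exp (-d * Complex.I) - 1 - (Complex.exp (d * Complex.I) - 1)‖ / 2
        ≤ (‖Complex.exp (-d * Complex.I) - 1‖ + ‖Complex.exp (d * Complex.I) - 1‖) / 2 := by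
          linarith
      _ ≤ 2 * ‖d‖ := by linarith
  calc ‖Complex.cos ((A : ℂ) + d) - Complex.cos (A : ℂ)‖
      = ‖Complex.cos A * (Complex.cos d - 1) - Complex.sin A * Complex.sin d‖ := by
        rw [hsplit]
    _ ≤ ‖Complex.cos (A:ℂ) * (Complex.cos d - 1)‖ + ‖Complex.sin (A:ℂ) * Complex.sin d‖ :=
        norm_sub_le _ _
    _ ≤ 1 * (2 * ‖d‖) + 1 * (2 * ‖d‖) := by
        rw [norm_mul, norm_mul]
        have q1 := mul_le_mul hcosA hcos1 (norm_nonneg _) zero_le_one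
        have q2 := mul_le_mul hsinA hsin (norm_nonneg _) zero_le_one
        linarith
    _ = 4 * ‖d‖ := by ring

lemma abs_le_abs_tan {x : ℝ} (hx : |x| < Real.pi / 2) : |x| ≤ |Real.tan x| := by
  rcases lt_trichotomy x 0 with h | h | h
  · have hx' : 0 < -x := by linarith
    have hx2 : -x < Real.pi / 2 := by
      have := abs_lt.1 hx; linarith [this.1]
    have := Real.lt_tan hx' hx2
    rw [Real.tan_neg] at this
    rw [abs_of_neg h]
    calc -x ≤ -Real.tan x := this.le
      _ ≤ |(-Real.tan x)| := le_abs_self _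
      _ = |Real.tan x| := abs_neg _
  · simp [h]
  · have hx2 : x < Real.pi / 2 := lt_of_abs_lt hx
    have := Real.lt_tan h hx2
    rw [abs_of_pos h]
    exact this.le.trans (le_abs_self _)

lemma abs_arg_le {q : ℂ} (hq : 0 < q.re) : |q.arg| ≤ |q.im| / q.re := by
  have harg : |q.arg| < Real.pi / 2 := Complex.abs_arg_lt_pi_div_two_iff.2 (Or.inl hq)
  have h1 : |q.arg| ≤ |Real.tan q.arg| := abs_le_abs_tan harg
  rw [Complex.tan_arg, abs_div, abs_of_pos hq] at h1
  exact h1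

/-- Main quantitative estimate: on the disc, `wit z₀ z` is within `108 / s` of
`cos (log s)` where `s = Re (wq z₀ z)`. -/
lemma wit_close {z₀ z : ℂ} (hz₀ : ‖z₀‖ = 1) (hz : ‖z‖ < 1) :
    ‖wit z₀ z - ((Real.cos (Real.log ((wq z₀ z).re)) : ℝ) : ℂ)‖ ≤ 108 / (wq z₀ z).re := by
  set q := wq z₀ z with hq
  set s := q.re with hs
  have hs1 : 1 ≤ s := wq_re_ge_one hz₀ hz
  have hs0 : 0 < s := by linarith
  have him : |q.im| ≤ Real.pi / 2 := wq_im_le hz₀ hz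
  have him2 : |q.im| ≤ 2 := by
    have := Real.pi_le_four; linarith
  by_cases hcase : s ≤ 12
  · -- crude bound
    have h1 : ‖wit z₀ z‖ ≤ 8 := wit_norm_le hz₀ hz
    have h2 : ‖((Real.cos (Real.log s) : ℝ) : ℂ)‖ ≤ 1 := by
      rw [Complex.norm_real, Real.norm_eq_abs]; exact Real.abs_cos_le_one _
    have h3 : ‖wit z₀ z - ((Real.cos (Real.log s) : ℝ) : ℂ)‖ ≤ 9 := by
      have := norm_sub_le (wit z₀ z) ((Real.cos (Real.log s) : ℝ) : ℂ)
      linarith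
    have h4 : (9:ℝ) ≤ 108 / s := by
      rw [le_div_iff₀ hs0]; linarith
    linarith
  · push_neg at hcase
    set d : ℂ := Complex.log q - ((Real.log s : ℝ) : ℂ) with hd
    -- real part bound
    have habsq : ‖q‖ ≤ s + |q.im| := by
      have := Complex.norm_le_abs_re_add_abs_im q
      rw [← hs, abs_of_pos hs0] at this
      exact this
    have habsq_ge : s ≤ ‖q‖ := by
      calc s = q.re := hs
        _ ≤ ‖q‖ := Complex.re_le_norm q
    have hre_d : d.re = Real.log (‖q‖) - Real.log s := by
      rw [hd, Complex.sub_re, Complex.log_re, Complex.ofReal_re]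
    have hre_nonneg : 0 ≤ d.re := by
      rw [hre_d]; have := Real.log_le_log hs0 habsq_ge; linarith
    have hre_le : d.re ≤ 2 / s := by
      rw [hre_d]
      have h1 : Real.log (‖q‖) - Real.log s = Real.log (‖q‖ / s) := by
        rw [Real.log_div (lt_of_lt_of_le hs0 habsq_ge).ne' hs0.ne']
      rw [h1]
      have h2 : Real.log (‖q‖ / s) ≤ ‖q‖ / s - 1 :=
        Real.log_le_sub_one_of_pos (div_pos (lt_of_lt_of_le hs0 habsq_ge) hs0)
      have h3 : ‖q‖ / s - 1 ≤ |q.im| / s := by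
        have hdiv : ‖q‖ / s ≤ (s + |q.im|) / s := by gcongr
        rw [add_div, div_self hs0.ne'] at hdiv
        linarith
      have h4 : |q.im| / s ≤ 2 / s := by gcongr
      linarith
    have him_d : |d.im| ≤ 2 / s := by
      have hdim : d.im = q.arg := by
        rw [hd, Complex.sub_im, Complex.log_im, Complex.ofReal_im, sub_zero]
      rw [hdim]
      have h1 : |q.arg| ≤ |q.im| / q.re := abs_arg_le (by rw [← hs]; exact hs0)
      have h2 : |q.im| / q.re ≤ 2 / s := by rw [← hs]; gcongr
      linarith
    have hnorm_d : ‖d‖ ≤ 4 / s := by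
      have h1 : ‖d‖ ≤ |d.re| + |d.im| := Complex.norm_le_abs_re_add_abs_im d
      have h2 : |d.re| = d.re := abs_of_nonneg hre_nonneg
      have : (2:ℝ)/s + 2/s = 4/s := by ring
      rw [h2] at h1
      linarith
    have hd1 : ‖d‖ ≤ 1 := by
      have h12 : (4:ℝ)/s ≤ 4/12 := by gcongr
      linarith
    have hkey : Complex.log q = ((Real.log s : ℝ) : ℂ) + d := by rw [hd]; ring
    have heq : wit z₀ z = Complex.cos (((Real.log s : ℝ) : ℂ) + d) := by
      rw [wit, ← hq, hkey]
    have hreal : ((Real.cos (Real.log s) : ℝ) : ℂ) = Complex.cos ((Real.log s : ℝ) : ℂ) :=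
      Complex.ofReal_cos _
    rw [heq, hreal]
    calc ‖Complex.cos (((Real.log s : ℝ) : ℂ) + d) - Complex.cos ((Real.log s : ℝ) : ℂ)‖
        ≤ 4 * ‖d‖ := cos_diff_le _ _ hd1
      _ ≤ 4 * (4 / s) := by gcongr
      _ ≤ 108 / s := by
          rw [show (4:ℝ) * (4 / s) = 16 / s by ring]
          gcongr
          norm_num

lemma telescope_bound (sm : ℕ → ℝ) (B : ℝ) (hstep : ∀ m, |sm (m+1) - sm m| ≤ B) :
    ∀ n p, sm (p + n) - sm p ≤ n * B := by
  intro n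
  induction n with
  | zero => intro p; simp
  | succ n ih =>
    intro p
    have h1 := ih p
    have h2 := hstep (p + n)
    have h3 := abs_le.1 h2
    have : p + (n+1) = (p + n) + 1 := by omega
    rw [this]
    push_cast
    nlinarith [h3.2]

/-- If a real sequence with bounded steps tends to infinity and starts below `lo`,
then it spends a long consecutive window inside `[lo, hi]`. -/
lemma window_exists (sm : ℕ → ℝ) (B : ℝ) (hB : 1 ≤ B)
    (hstep : ∀ m, |sm (m+1) - sm m| ≤ B)
    (htop : Tendsto sm atTop atTop) {lo hi : ℝ}
    (hlo : sm 0 < lo) (hlohi : lo ≤ hi) :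
    ∃ k nl : ℕ, (hi - lo)/B - 1 ≤ (nl:ℝ) ∧
      ∀ i, 1 ≤ i → i ≤ nl → lo ≤ sm (k+i) ∧ sm (k+i) ≤ hi := by
  have hex : ∃ m, hi < sm m := by
    rcases (tendsto_atTop.1 htop (hi+1)).exists with ⟨m, hm⟩
    exact ⟨m, by linarith⟩
  classical
  set m₂ := Nat.find hex with hm₂
  have hm₂spec : hi < sm m₂ := Nat.find_spec hex
  have hm₂min : ∀ m, m < m₂ → ¬ (hi < sm m) := fun m hm => Nat.find_min hex hm
  have hm₂pos : 1 ≤ m₂ := by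
    by_contra h
    push_neg at h
    interval_cases m₂
    · linarith
  set P : ℕ → Prop := fun m => sm m < lo with hP
  set k := Nat.findGreatest P (m₂ - 1) with hk
  have hkspec : P k := Nat.findGreatest_spec (m := 0) (by omega) (by exact hlo)
  have hkle : k ≤ m₂ - 1 := Nat.findGreatest_le _
  have hkgr : ∀ m, k < m → m ≤ m₂ - 1 → ¬ P m := fun m h1 h2 =>
    Nat.findGreatest_is_greatest h1 h2
  set nl := m₂ - 1 - k with hnl
  refine ⟨k, nl, ?_, ?_⟩
  · -- length bound
    have hsum : sm (k + (nl + 1)) - sm k ≤ ((nl + 1 : ℕ) : ℝ) * B :=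
      telescope_bound sm B hstep (nl+1) k
    have hidx : k + (nl + 1) = m₂ := by omega
    rw [hidx] at hsum
    have h1 : hi - lo < ((nl + 1 : ℕ) : ℝ) * B := by
      have := hkspec
      rw [hP] at this
      linarith
    have hBpos : (0:ℝ) < B := by linarith
    rw [div_sub_one hBpos.ne', div_le_iff₀ hBpos]
    push_cast at h1 ⊢
    nlinarith
  · intro i hi1 hile
    have h1 : k < k + i := by omega
    have h2 : k + i ≤ m₂ - 1 := by omega
    constructor
    · have := hkgr (k+i) h1 h2
      rw [hP] at this
      exact le_of_not_gt this
    · have h3 : k + i < m₂ := by omega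
      have := hm₂min (k+i) h3
      push_neg at this
      exact this

lemma avg_close {n : ℕ} (hn : 1 ≤ n) (a : ℕ → ℂ) (c : ℂ) (η : ℝ)
    (h : ∀ i ∈ Finset.range n, ‖a i - c‖ ≤ η) :
    ‖(n:ℂ)⁻¹ * ∑ i ∈ Finset.range n, a i - c‖ ≤ η := by
  have hne : (n:ℂ) ≠ 0 := Nat.cast_ne_zero.2 (by omega)
  have key : (n:ℂ)⁻¹ * ∑ i ∈ Finset.range n, a i - c
      = (n:ℂ)⁻¹ * ∑ i ∈ Finset.range n, (a i - c) := by
    rw [Finset.sum_sub_distrib, Finset.sum_const, Finset.card_range]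
    field_simp
    rw [nsmul_eq_mul]
  rw [key, norm_mul, norm_inv]
  have h1 : ‖∑ i ∈ Finset.range n, (a i - c)‖ ≤ n * η := by
    calc ‖∑ i ∈ Finset.range n, (a i - c)‖ ≤ ∑ i ∈ Finset.range n, ‖a i - c‖ :=
          norm_sum_le _ _
      _ ≤ ∑ _i ∈ Finset.range n, η := Finset.sum_le_sum h
      _ = n * η := by rw [Finset.sum_const, Finset.card_range, nsmul_eq_mul]
  have h2 : ‖(n:ℂ)‖ = (n:ℝ) := by
    rw [Complex.norm_natCast]
  rw [h2]
  have hnpos : (0:ℝ) < n := by exact_mod_cast Nat.pos_of_ne_zero (by omega)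
  calc ((n:ℝ))⁻¹ * ‖∑ i ∈ Finset.range n, (a i - c)‖ ≤ ((n:ℝ))⁻¹ * (n * η) := by
        apply mul_le_mul_of_nonneg_left h1 (by positivity)
    _ = η := by field_simp

/-- Extraction of a long window where the witness values are `1/32`-close to `τ`. -/
lemma window_value (sm : ℕ → ℝ) (B : ℝ) (hB : 1 ≤ B)
    (hstep : ∀ m, |sm (m+1) - sm m| ≤ B)
    (htop : Tendsto sm atTop atTop) (wv : ℕ → ℂ)
    (hclose : ∀ m, ‖wv m - ((Real.cos (Real.log (sm m)) : ℝ) : ℂ)‖ ≤ 108 / sm m)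
    (A₀ τ : ℝ)
    (hcos : ∀ x : ℝ, |x| ≤ 8⁻¹ → |Real.cos (A₀ + x) - τ| ≤ 1/128)
    (N : ℕ) (hN : 1 ≤ N)
    (hA₀ : max (max 10800 (sm 0 + 1)) (5*B*((N:ℝ)+2)) ≤ Real.exp (A₀ - 8⁻¹)) :
    ∃ k : ℕ, ∀ i, 1 ≤ i → i ≤ N → ‖wv (k+i) - ((τ:ℝ):ℂ)‖ ≤ 1/32 := by
  set R : ℝ := max (max 10800 (sm 0 + 1)) (5*B*((N:ℝ)+2)) with hR
  set lo : ℝ := Real.exp (A₀ - 8⁻¹) with hlo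
  set hi : ℝ := Real.exp (A₀ + 8⁻¹) with hhi
  have hR1 : (10800:ℝ) ≤ R := le_trans (le_max_left _ _) (le_max_left _ _)
  have hRsm : sm 0 + 1 ≤ R := le_trans (le_max_right _ _) (le_max_left _ _)
  have hRN : 5*B*((N:ℝ)+2) ≤ R := le_max_right _ _
  have hlo_ge : R ≤ lo := hA₀
  have hs0lo : sm 0 < lo := by linarith
  have hlohi : lo ≤ hi := by
    rw [hlo, hhi]; apply Real.exp_le_exp.2; linarith
  obtain ⟨k, nl, hlen, hwin⟩ := window_exists sm B hB hstep htop hs0lo hlohi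
  -- N ≤ nl
  have hexp4 : Real.exp 4⁻¹ ≥ 1 + 4⁻¹ := by
    have := Real.add_one_le_exp (4⁻¹ : ℝ); linarith
  have hhi_eq : hi = lo * Real.exp 4⁻¹ := by
    rw [hlo, hhi, ← Real.exp_add]; congr 1; ring
  have hBpos : (0:ℝ) < B := by linarith
  have hlopos : (0:ℝ) < lo := Real.exp_pos _
  have hdiff : lo / 4 ≤ hi - lo := by
    rw [hhi_eq]; nlinarith
  have hlolow : 5*B*((N:ℝ)+2) ≤ lo := le_trans hRN hlo_ge
  have hNle : (N:ℝ) ≤ (hi - lo)/B - 1 := by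
    rw [le_sub_iff_add_le, le_div_iff₀ hBpos]
    have hN0 : (0:ℝ) ≤ (N:ℝ) := Nat.cast_nonneg N
    nlinarith
  have hNnl : N ≤ nl := by
    have : (N:ℝ) ≤ (nl:ℝ) := le_trans hNle hlen
    exact_mod_cast this
  refine ⟨k, fun i hi1 hiN => ?_⟩
  obtain ⟨hwlo, hwhi⟩ := hwin i hi1 (le_trans hiN hNnl)
  set s : ℝ := sm (k+i) with hs
  have hspos : (0:ℝ) < s := by linarith
  have hs10800 : (10800:ℝ) ≤ s := by linarith
  -- log s ∈ [A₀ - 1/8, A₀ + 1/8]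
  have hlog_lo : A₀ - 8⁻¹ ≤ Real.log s := by
    have := Real.log_le_log hlopos hwlo
    rw [hlo, Real.log_exp] at this; linarith
  have hlog_hi : Real.log s ≤ A₀ + 8⁻¹ := by
    have := Real.log_le_log hspos hwhi
    rw [hhi, Real.log_exp] at this; linarith
  set x : ℝ := Real.log s - A₀ with hx
  have hxabs : |x| ≤ 8⁻¹ := by
    rw [abs_le]; constructor <;> [linarith; linarith]
  have hcosx : |Real.cos (Real.log s) - τ| ≤ 1/128 := by
    have := hcos x hxabs
    have hAx : A₀ + x = Real.log s := by rw [hx]; ring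
    rwa [hAx] at this
  have herr : ‖wv (k+i) - ((Real.cos (Real.log s) : ℝ) : ℂ)‖ ≤ 108 / s := hclose (k+i)
  have h108 : (108:ℝ) / s ≤ 1/100 := by
    rw [div_le_div_iff₀ hspos (by norm_num)]
    linarith
  calc ‖wv (k+i) - ((τ:ℝ):ℂ)‖
      ≤ ‖wv (k+i) - ((Real.cos (Real.log s) : ℝ) : ℂ)‖ +
        ‖((Real.cos (Real.log s) : ℝ) : ℂ) - ((τ:ℝ):ℂ)‖ := by
        have := norm_add_le (wv (k+i) - ((Real.cos (Real.log s) : ℝ) : ℂ))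
          (((Real.cos (Real.log s) : ℝ) : ℂ) - ((τ:ℝ):ℂ))
        simpa [sub_add_sub_cancel] using this
    _ ≤ 108 / s + 1/128 := by
        have hcast : ‖((Real.cos (Real.log s) : ℝ) : ℂ) - ((τ:ℝ):ℂ)‖
            = |Real.cos (Real.log s) - τ| := by
          rw [← Complex.ofReal_sub, Complex.norm_real, Real.norm_eq_abs]
        rw [hcast]
        linarith
    _ ≤ 1/32 := by linarith

lemma unif_imp_mean (φ : ℂ → ℂ) (hU : UnifMeanErgodicHInf φ) : MeanErgodicHInf φ := by
  obtain ⟨P, hP⟩ := hU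
  intro f hf
  obtain ⟨hfd, M, hM⟩ := hf
  set M' : ℝ := max M 1 with hM'def
  have hM'pos : (0:ℝ) < M' := lt_of_lt_of_le one_pos (le_max_right _ _)
  have hM'ne : ((M':ℝ):ℂ) ≠ 0 := by
    simp only [ne_eq, Complex.ofReal_eq_zero]
    exact hM'pos.ne'
  set f' : ℂ → ℂ := fun z => ((M':ℝ):ℂ)⁻¹ * f z with hf'def
  have hf'bd : ∀ z ∈ ball (0:ℂ) 1, ‖f' z‖ ≤ 1 := by
    intro z hz
    rw [hf'def]
    simp only [norm_mul, norm_inv, Complex.norm_real, Real.norm_eq_abs, abs_of_pos hM'pos]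
    rw [inv_mul_le_iff₀ hM'pos, mul_one]
    exact le_trans (hM z hz) (le_max_left _ _)
  have hf'HInf : IsHInf f' :=
    ⟨fun z hz => ((hfd z hz).const_mul _), 1, hf'bd⟩
  have hscale : ∀ n z, cesaro φ f n z = ((M':ℝ):ℂ) * cesaro φ f' n z := by
    intro n z
    rw [cesaro, cesaro, hf'def]
    rw [← Finset.mul_sum]
    rw [show ((M':ℝ):ℂ) * ((n:ℂ)⁻¹ * (((M':ℝ):ℂ)⁻¹ * ∑ m ∈ Finset.Icc 1 n, f (φ^[m] z)))
      = (((M':ℝ):ℂ) * ((M':ℝ):ℂ)⁻¹) * ((n:ℂ)⁻¹ * ∑ m ∈ Finset.Icc 1 n, f (φ^[m] z)) by ring,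
      mul_inv_cancel₀ hM'ne, one_mul]
  refine ⟨fun z => ((M':ℝ):ℂ) * P f' z, ?_⟩
  rw [Metric.tendstoUniformlyOn_iff]
  intro ε hε
  obtain ⟨N, hN⟩ := hP (ε/(2*M')) (by positivity)
  rw [eventually_atTop]
  refine ⟨N, fun n hn z hz => ?_⟩
  have h1 := hN n hn f' hf'HInf hf'bd z hz
  rw [dist_eq_norm, hscale n z, ← mul_sub, norm_mul, Complex.norm_real,
    Real.norm_eq_abs, abs_of_pos hM'pos]
  have h2 : ‖P f' z - cesaro φ f' n z‖ ≤ ε/(2*M') := by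
    rw [norm_sub_rev]; exact h1
  calc M' * ‖P f' z - cesaro φ f' n z‖ ≤ M' * (ε/(2*M')) := by
        exact mul_le_mul_of_nonneg_left h2 hM'pos.le
    _ = ε/2 := by field_simp
    _ < ε := by linarith

set_option maxHeartbeats 2000000 in
lemma not_mean_ergodic (φ : ℂ → ℂ) (hφd : DifferentiableOn ℂ φ (ball (0:ℂ) 1))
    (hφm : MapsTo φ (ball (0:ℂ) 1) (ball (0:ℂ) 1))
    (z₀ : ℂ) (hz₀ : ‖z₀‖ = 1)
    (hDW : TendstoLocallyUniformlyOn (fun (n : ℕ) (z : ℂ) => φ^[n] z) (fun _ => z₀)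
      atTop (ball (0:ℂ) 1)) :
    ¬ MeanErgodicHInf φ := by
  intro hMe
  have hball0 : (0:ℂ) ∈ ball (0:ℂ) 1 := mem_ball_self one_pos
  have hiter : ∀ m : ℕ, DifferentiableOn ℂ (φ^[m]) (ball (0:ℂ) 1) ∧
      MapsTo (φ^[m]) (ball (0:ℂ) 1) (ball (0:ℂ) 1) := by
    intro m
    induction m with
    | zero =>
      refine ⟨?_, ?_⟩
      · simpa [Function.iterate_zero] using differentiableOn_id
      · simpa [Function.iterate_zero] using mapsTo_id (ball (0:ℂ) 1)
    | succ m ih =>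
      rw [Function.iterate_succ']
      exact ⟨hφd.comp ih.1 ih.2, hφm.comp ih.2⟩
  have horb : ∀ m, φ^[m] 0 ∈ ball (0:ℂ) 1 := fun m => (hiter m).2 hball0
  have hnormo : ∀ m, ‖φ^[m] 0‖ < 1 := fun m => mem_ball_zero_iff.1 (horb m)
  have hφ0 : ‖φ 0‖ < 1 := mem_ball_zero_iff.1 (hφm hball0)
  -- pseudo-hyperbolic contraction constant
  set δ : ℝ := max ‖φ 0‖ (1/2) with hδdef
  have hδ1 : 1/2 ≤ δ := le_max_right _ _
  have hδ2 : δ < 1 := max_lt hφ0 (by norm_num)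
  -- Schwarz–Pick step bound along the orbit
  have hsp : ∀ m, ‖φ^[m] 0 - φ^[m+1] 0‖ ≤
      δ * ‖1 - (starRingEnd ℂ) (φ^[m] 0) * φ^[m+1] 0‖ := by
    intro m
    have h1 := schwarz_pick (hiter m).1 (hiter m).2 hball0 (hφm hball0)
    rw [← Function.iterate_succ_apply] at h1
    have h2 : ‖mob 0 (φ 0)‖ = ‖φ 0‖ := by
      simp [mob]
    rw [h2] at h1
    have hden := mob_denom_ne (hnormo m) (hnormo (m+1))
    have hdpos : 0 < ‖1 - (starRingEnd ℂ) (φ^[m] 0) * φ^[m+1] 0‖ := norm_pos_iff.2 hden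
    rw [mob, norm_div, div_le_iff₀ hdpos] at h1
    calc ‖φ^[m] 0 - φ^[m+1] 0‖
        ≤ ‖φ 0‖ * ‖1 - (starRingEnd ℂ) (φ^[m] 0) * φ^[m+1] 0‖ := h1
      _ ≤ δ * ‖1 - (starRingEnd ℂ) (φ^[m] 0) * φ^[m+1] 0‖ :=
          mul_le_mul_of_nonneg_right (le_max_left _ _) (norm_nonneg _)
  -- comparability of boundary distances
  set c₂ : ℝ := min (1/2) ((1 - δ^2) * (1-δ) / (16 * δ)) with hc₂def
  set K : ℝ := 2*δ/(1-δ) with hKdef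
  have hδ0 : (0:ℝ) < δ := by linarith
  have h1δ : (0:ℝ) < 1 - δ := by linarith
  have hc₂pos : 0 < c₂ := by
    have h1 : (0:ℝ) < 1 - δ^2 := by nlinarith
    exact lt_min (by norm_num) (div_pos (mul_pos h1 h1δ) (by linarith))
  have hc₂le : c₂ ≤ 1/2 := min_le_left _ _
  have hKpos : 0 < K := div_pos (by linarith) h1δ
  have hratio : ∀ m, c₂ * ‖z₀ - φ^[m] 0‖ ≤ ‖z₀ - φ^[m+1] 0‖ ∧
      ‖z₀ - φ^[m+1] 0‖ ≤ (1 + K) * ‖z₀ - φ^[m] 0‖ := fun m =>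
    dist_ratio hδ1 hδ2 (hnormo m) (hnormo (m+1)) hz₀ (hsp m)
  have hzpos : ∀ m, 0 < ‖z₀ - φ^[m] 0‖ := by
    intro m
    have h1 := norm_sub_norm_le z₀ (φ^[m] 0)
    rw [hz₀] at h1
    linarith [hnormo m]
  -- the potential sequence
  set sm : ℕ → ℝ := fun m => (wq z₀ (φ^[m] 0)).re with hsmdef
  have hs1 : ∀ m, 1 ≤ sm m := fun m => wq_re_ge_one hz₀ (hnormo m)
  set B : ℝ := max (Real.log c₂⁻¹) (Real.log (1+K)) + 1 with hBdef
  have hmax0 : 0 ≤ max (Real.log c₂⁻¹) (Real.log (1+K)) :=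
    le_trans (Real.log_nonneg (by linarith)) (le_max_right _ _)
  have hB1 : 1 ≤ B := by rw [hBdef]; linarith
  have hstep : ∀ m, |sm (m+1) - sm m| ≤ B := by
    intro m
    have e1 : sm m = 1 + Real.log 2 - Real.log ‖z₀ - φ^[m] 0‖ := wq_re hz₀ (hnormo m)
    have e2 : sm (m+1) = 1 + Real.log 2 - Real.log ‖z₀ - φ^[m+1] 0‖ :=
      wq_re hz₀ (hnormo (m+1))
    obtain ⟨hr1, hr2⟩ := hratio m
    have l1 : Real.log ‖z₀ - φ^[m+1] 0‖ ≤ Real.log (1+K) + Real.log ‖z₀ - φ^[m] 0‖ := by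
      have h := Real.log_le_log (hzpos (m+1)) hr2
      rw [Real.log_mul (by linarith : (1:ℝ)+K ≠ 0) (hzpos m).ne'] at h
      linarith
    have l2 : Real.log c₂ + Real.log ‖z₀ - φ^[m] 0‖ ≤ Real.log ‖z₀ - φ^[m+1] 0‖ := by
      have h := Real.log_le_log (mul_pos hc₂pos (hzpos m)) hr1
      rw [Real.log_mul hc₂pos.ne' (hzpos m).ne'] at h
      linarith
    have hloginv : Real.log c₂⁻¹ = - Real.log c₂ := Real.log_inv _
    rw [e1, e2, abs_le]
    constructor
    · have := le_max_right (Real.log c₂⁻¹) (Real.log (1+K))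
      rw [hBdef]; linarith
    · have := le_max_left (Real.log c₂⁻¹) (Real.log (1+K))
      rw [hBdef]; linarith
  -- the potential tends to infinity
  have hzlim : Tendsto (fun m => φ^[m] 0) atTop (𝓝 z₀) :=
    hDW.tendsto_at hball0
  have hnlim : Tendsto (fun m => ‖z₀ - φ^[m] 0‖) atTop (𝓝 0) := by
    have h1 : Tendsto (fun m => z₀ - φ^[m] 0) atTop (𝓝 (z₀ - z₀)) :=
      tendsto_const_nhds.sub hzlim
    rw [sub_self] at h1
    simpa using h1.norm
  have hloglim : Tendsto (fun m => Real.log ‖z₀ - φ^[m] 0‖) atTop atBot := by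
    apply Real.tendsto_log_nhdsGT_zero.comp
    apply tendsto_nhdsWithin_of_tendsto_nhds_of_eventually_within _ hnlim
    exact Eventually.of_forall (fun m => hzpos m)
  have htop : Tendsto sm atTop atTop := by
    have hsm_eq : sm = fun m => 1 + Real.log 2 - Real.log ‖z₀ - φ^[m] 0‖ :=
      funext fun m => wq_re hz₀ (hnormo m)
    rw [hsm_eq]
    simp only [sub_eq_add_neg]
    apply tendsto_atTop_add_const_left
    exact tendsto_neg_atTop_iff.2 hloglim
  -- the witness function
  set f : ℂ → ℂ := wit z₀ with hfdef
  have hHInf : IsHInf f :=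
    ⟨fun z hz => (wit_differentiableAt hz₀ (mem_ball_zero_iff.1 hz)).differentiableWithinAt,
      8, fun z hz => wit_norm_le hz₀ (mem_ball_zero_iff.1 hz)⟩
  obtain ⟨g, htu⟩ := hMe f hHInf
  have hfb : ∀ m, ‖f (φ^[m] 0)‖ ≤ 8 := fun m => wit_norm_le hz₀ (hnormo m)
  -- cesaro sums along the orbit
  have hces : ∀ k n : ℕ, cesaro φ f n (φ^[k] 0)
      = (n:ℂ)⁻¹ * ∑ i ∈ Finset.range n, f (φ^[k+1+i] 0) := by
    intro k n
    rw [cesaro, ← Finset.Ico_add_one_right_eq_Icc, Finset.sum_Ico_eq_sum_range]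
    simp only [Nat.add_sub_cancel]
    congr 1
    apply Finset.sum_congr rfl
    intro i _
    have hidx : 1+i+k = k+1+i := by omega
    conv_rhs => rw [← hidx, Function.iterate_add_apply]
  have hglim : ∀ k : ℕ, Tendsto (fun n => cesaro φ f n (φ^[k] 0)) atTop
      (𝓝 (g (φ^[k] 0))) := fun k => htu.tendsto_at (horb k)
  -- g is constant along the orbit
  have hgconst : ∀ k, g (φ^[k] 0) = g 0 := by
    intro k
    induction k with
    | zero => rfl
    | succ k ih =>
      have hdiffexpr : ∀ n : ℕ, cesaro φ f n (φ^[k+1] 0) - cesaro φ f n (φ^[k] 0)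
          = (n:ℂ)⁻¹ * (f (φ^[k+1+n] 0) - f (φ^[k+1] 0)) := by
        intro n
        rw [hces (k+1) n, hces k n, ← mul_sub]
        congr 1
        have h1 := Finset.sum_range_succ' (fun i => f (φ^[k+1+i] 0)) n
        simp only [Nat.add_zero] at h1
        have h2 := Finset.sum_range_succ (fun i => f (φ^[k+1+i] 0)) n
        have hA : ∑ i ∈ Finset.range n, f (φ^[k+1+1+i] 0)
            = ∑ i ∈ Finset.range n, f (φ^[k+1+(i+1)] 0) :=
          Finset.sum_congr rfl (fun i _ => by
            have hidx : k+1+1+i = k+1+(i+1) := by omega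
            rw [hidx])
        have hS2 : ∑ i ∈ Finset.range n, f (φ^[k+1+(i+1)] 0)
            = (∑ i ∈ Finset.range (n+1), f (φ^[k+1+i] 0)) - f (φ^[k+1] 0) := by
          rw [h1]; ring
        have hS1 : ∑ i ∈ Finset.range n, f (φ^[k+1+i] 0)
            = (∑ i ∈ Finset.range (n+1), f (φ^[k+1+i] 0)) - f (φ^[k+1+n] 0) := by
          rw [h2]; ring
        rw [hA, hS2, hS1]
        ring
      have hlim0 : Tendsto (fun n => cesaro φ f n (φ^[k+1] 0) - cesaro φ f n (φ^[k] 0))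
          atTop (𝓝 0) := by
        have hbound : ∀ n : ℕ, ‖cesaro φ f n (φ^[k+1] 0) - cesaro φ f n (φ^[k] 0)‖
            ≤ (n:ℝ)⁻¹ * 16 := by
          intro n
          rw [hdiffexpr n, norm_mul, norm_inv, Complex.norm_natCast]
          apply mul_le_mul_of_nonneg_left _ (by positivity)
          have h3 := norm_sub_le (f (φ^[k+1+n] 0)) (f (φ^[k+1] 0))
          linarith [hfb (k+1+n), hfb (k+1)]
        have hzero : Tendsto (fun n : ℕ => (n:ℝ)⁻¹ * 16) atTop (𝓝 0) := by
          simpa using tendsto_inv_atTop_nhds_zero_nat.mul_const (16:ℝ)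
        exact squeeze_zero_norm hbound hzero
      have huniq := tendsto_nhds_unique ((hglim (k+1)).sub (hglim k)) hlim0
      have : g (φ^[k+1] 0) = g (φ^[k] 0) := by
        have := sub_eq_zero.1 huniq
        exact this
      rw [this, ih]
  -- uniform convergence bound
  obtain ⟨N₀, hN₀⟩ := eventually_atTop.1
    ((Metric.tendstoUniformlyOn_iff.1 htu) (1/4) (by norm_num))
  set N : ℕ := max N₀ 1 with hNdef
  have hN1 : 1 ≤ N := le_max_right _ _
  have hunif : ∀ k, dist (g (φ^[k] 0)) (cesaro φ f N (φ^[k] 0)) < 1/4 :=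
    fun k => hN₀ N (le_max_left _ _) _ (horb k)
  -- windows
  set wv : ℕ → ℂ := fun m => f (φ^[m] 0) with hwvdef
  have hclose : ∀ m, ‖wv m - ((Real.cos (Real.log (sm m)) : ℝ) : ℂ)‖ ≤ 108 / sm m :=
    fun m => wit_close hz₀ (hnormo m)
  set R : ℝ := max (max 10800 (sm 0 + 1)) (5*B*((N:ℝ)+2)) with hRdef
  have hR1 : (10800:ℝ) ≤ R := le_trans (le_max_left _ _) (le_max_left _ _)
  have hRpos : (0:ℝ) < R := by linarith
  have hlogR : 0 ≤ Real.log R := Real.log_nonneg (by linarith)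
  obtain ⟨j, hj⟩ := exists_nat_ge (Real.log R + 1)
  have hπ3 : (3:ℝ) < Real.pi := Real.pi_gt_three
  have hA1 : Real.log R + 8⁻¹ ≤ 2*Real.pi*(j:ℝ) - 8⁻¹ := by
    have hj0 : (0:ℝ) ≤ (j:ℝ) := Nat.cast_nonneg j
    nlinarith
  have hexpA : R ≤ Real.exp (2*Real.pi*(j:ℝ) - 8⁻¹) := by
    calc R = Real.exp (Real.log R) := (Real.exp_log hRpos).symm
      _ ≤ _ := Real.exp_le_exp.2 (by linarith)
  have hexpA' : R ≤ Real.exp ((2*Real.pi*(j:ℝ) + Real.pi) - 8⁻¹) :=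
    le_trans hexpA (Real.exp_le_exp.2 (by linarith [Real.pi_pos]))
  have hcosplus : ∀ x : ℝ, |x| ≤ 8⁻¹ →
      |Real.cos (2*Real.pi*(j:ℝ) + x) - 1| ≤ 1/128 := by
    intro x hx
    have h1 : 2*Real.pi*(j:ℝ) + x = x + (j:ℤ) * (2*Real.pi) := by push_cast; ring
    rw [h1, Real.cos_add_int_mul_two_pi]
    have h2 := Real.one_sub_sq_div_two_le_cos (x := x)
    have h3 := Real.cos_le_one x
    have h4 := abs_le.1 hx
    rw [abs_le]
    constructor <;> nlinarith
  have hcosminus : ∀ x : ℝ, |x| ≤ 8⁻¹ →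
      |Real.cos ((2*Real.pi*(j:ℝ) + Real.pi) + x) - (-1)| ≤ 1/128 := by
    intro x hx
    have h1 : (2*Real.pi*(j:ℝ) + Real.pi) + x = (x + Real.pi) + (j:ℤ) * (2*Real.pi) := by
      push_cast; ring
    rw [h1, Real.cos_add_int_mul_two_pi, Real.cos_add_pi]
    have h2 := Real.one_sub_sq_div_two_le_cos (x := x)
    have h3 := Real.cos_le_one x
    have h4 := abs_le.1 hx
    rw [abs_le]
    constructor <;> nlinarith
  obtain ⟨k₁, hk₁⟩ := window_value sm B hB1 hstep htop wv hclose
    (2*Real.pi*(j:ℝ)) 1 hcosplus N hN1 hexpA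
  obtain ⟨k₂, hk₂⟩ := window_value sm B hB1 hstep htop wv hclose
    (2*Real.pi*(j:ℝ) + Real.pi) (-1) hcosminus N hN1 hexpA'
  -- average estimates
  have havg : ∀ (k : ℕ) (τ : ℝ), (∀ i, 1 ≤ i → i ≤ N → ‖wv (k+i) - ((τ:ℝ):ℂ)‖ ≤ 1/32) →
      ‖cesaro φ f N (φ^[k] 0) - ((τ:ℝ):ℂ)‖ ≤ 1/32 := by
    intro k τ hwin
    rw [hces k N]
    apply avg_close hN1
    intro i hi
    have hi' := Finset.mem_range.1 hi
    have h := hwin (i+1) (by omega) (by omega)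
    have hidx : k+1+i = k+(i+1) := by omega
    rw [hidx]
    exact h
  have havg₁ := havg k₁ 1 hk₁
  have havg₂ := havg k₂ (-1) hk₂
  -- combine
  have hg₁ : ‖g 0 - ((1:ℝ):ℂ)‖ ≤ 1/4 + 1/32 := by
    have hd := hunif k₁
    rw [hgconst k₁, dist_eq_norm] at hd
    have htri := dist_triangle (g 0) (cesaro φ f N (φ^[k₁] 0)) ((1:ℝ):ℂ)
    rw [dist_eq_norm, dist_eq_norm, dist_eq_norm] at htri
    linarith [hd, havg₁]
  have hg₂ : ‖g 0 - ((-1:ℝ):ℂ)‖ ≤ 1/4 + 1/32 := by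
    have hd := hunif k₂
    rw [hgconst k₂, dist_eq_norm] at hd
    have htri := dist_triangle (g 0) (cesaro φ f N (φ^[k₂] 0)) ((-1:ℝ):ℂ)
    rw [dist_eq_norm, dist_eq_norm, dist_eq_norm] at htri
    linarith [hd, havg₂]
  have hcontr : (2:ℝ) ≤ ‖g 0 - ((-1:ℝ):ℂ)‖ + ‖g 0 - ((1:ℝ):ℂ)‖ := by
    have h1 : (g 0 - ((-1:ℝ):ℂ)) - (g 0 - ((1:ℝ):ℂ)) = 2 := by
      push_cast; ring
    have h2 := norm_sub_le (g 0 - ((-1:ℝ):ℂ)) (g 0 - ((1:ℝ):ℂ))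
    rw [h1] at h2
    have h3 : ‖(2:ℂ)‖ = 2 := by norm_num
    linarith [h2, h3.symm.le]
  linarith

/-- **Boundary Denjoy–Wolff point: never mean ergodic on `H^∞(𝔻)`.** Let `φ` be a
holomorphic self-map of `𝔻` whose iterates converge, uniformly on compact subsets of `𝔻`,
to a point `z₀ ∈ ∂𝔻`. Then `C_φ : H^∞(𝔻) → H^∞(𝔻)` is not mean ergodic, and in particular
not uniformly mean ergodic. -/
theorem stmt_9 (φ : ℂ → ℂ) (hφd : DifferentiableOn ℂ φ (ball (0:ℂ) 1))
    (hφm : MapsTo φ (ball (0:ℂ) 1) (ball (0:ℂ) 1))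
    (z₀ : ℂ) (hz₀ : ‖z₀‖ = 1)
    (hDW : TendstoLocallyUniformlyOn (fun (n : ℕ) (z : ℂ) => φ^[n] z) (fun _ => z₀)
      atTop (ball (0:ℂ) 1)) :
    ¬ MeanErgodicHInf φ ∧ ¬ UnifMeanErgodicHInf φ := by
  have h := not_mean_ergodic φ hφd hφm z₀ hz₀ hDW
  exact ⟨h, fun hU => h (unif_imp_mean φ hU)⟩
end
end

section
/- Let φ ∈ A(𝔻) be a symbol mapping 𝔻̄ into 𝔻̄ whose iterates φ^n converge to a point z₀ ∈ ∂𝔻 uniformly on the compact subsets of 𝔻 (φ has a boundary Denjoy–Wolff point). Then the composition operator C_φ : A(𝔻) → A(𝔻) is not uniformly mean ergodic. -/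
open Metric Set Filter Complex
open scoped Topology Classical

noncomputable section

/-- **Boundary Denjoy–Wolff point: never uniformly mean ergodic on `A(𝔻)`.** Let
`φ ∈ A(𝔻)` map `𝔻̄` into `𝔻̄` and suppose its iterates converge, uniformly on compact
subsets of `𝔻`, to a point `z₀ ∈ ∂𝔻`. Then `C_φ : A(𝔻) → A(𝔻)` is not uniformly mean
ergodic. -/
theorem stmt_10 (φ : ℂ → ℂ) (hφa : IsDiscAlg φ)
    (hφm : MapsTo φ (closedBall (0:ℂ) 1) (closedBall (0:ℂ) 1))
    (hφb : MapsTo φ (ball (0:ℂ) 1) (ball (0:ℂ) 1))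
    (z₀ : ℂ) (hz₀ : ‖z₀‖ = 1)
    (hDW : TendstoLocallyUniformlyOn (fun (n : ℕ) (z : ℂ) => φ^[n] z) (fun _ => z₀)
      atTop (ball (0:ℂ) 1)) :
    ¬ UnifMeanErgodicDiscAlg φ := by
  rintro ⟨P, hP⟩
  have ha_ball : ∀ m : ℕ, φ^[m] 0 ∈ ball (0:ℂ) 1 := by
    intro m
    induction m with
    | zero => simp
    | succ k ih =>
      rw [Function.iterate_succ_apply']
      exact hφb ih
  have ha_tend : Tendsto (fun m : ℕ => φ^[m] 0) atTop (𝓝 z₀) :=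
    hDW.tendsto_at (by simp)
  have hz₀cb : z₀ ∈ closedBall (0:ℂ) 1 := by
    simp [mem_closedBall_zero_iff, hz₀]
  have hces : ∀ f : ℂ → ℂ, ContinuousOn f (closedBall (0:ℂ) 1) →
      Tendsto (fun n => cesaro φ f n 0) atTop (𝓝 (f z₀)) := by
    intro f hf
    have h1 : Tendsto (fun i : ℕ => φ^[1 + i] 0) atTop (𝓝[closedBall (0:ℂ) 1] z₀) := by
      apply tendsto_nhdsWithin_of_tendsto_nhds_of_eventually_within
      · have := ha_tend.comp (tendsto_add_atTop_nat 1)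
        refine this.congr fun i => by simp [Nat.add_comm]
      · exact Eventually.of_forall fun i => ball_subset_closedBall (ha_ball _)
    have h2 : Tendsto (fun i : ℕ => f (φ^[1 + i] 0)) atTop (𝓝 (f z₀)) :=
      (hf.continuousWithinAt hz₀cb).tendsto.comp h1
    have h3 := h2.cesaro_smul
    refine h3.congr fun n => ?_
    rw [cesaro, ← Finset.Ico_add_one_right_eq_Icc, Finset.sum_Ico_eq_sum_range, Complex.real_smul]
    push_cast
    ring
  have hP0 : ∀ f, IsDiscAlg f → (∀ z ∈ closedBall (0:ℂ) 1, ‖f z‖ ≤ 1) →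
      P f 0 = f z₀ := by
    intro f hf hb
    have htend : Tendsto (fun n => cesaro φ f n 0) atTop (𝓝 (P f 0)) := by
      rw [Metric.tendsto_atTop]
      intro ε hε
      obtain ⟨N, hN⟩ := hP (ε/2) (by linarith)
      refine ⟨N, fun n hn => ?_⟩
      rw [dist_eq_norm]
      calc ‖cesaro φ f n 0 - P f 0‖ ≤ ε/2 := hN n hn f hf hb 0 (by simp)
        _ < ε := by linarith
    exact tendsto_nhds_unique htend (hces f hf.1)
  obtain ⟨N, hN⟩ := hP (1/4) (by norm_num)
  set n := max N 1 with hn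
  have hn1 : 1 ≤ n := le_max_right _ _
  have hnN : N ≤ n := le_max_left _ _
  have hne : (Finset.Icc 1 n).Nonempty := ⟨1, by simp [hn1]⟩
  set r := (Finset.Icc 1 n).sup' hne (fun m => ‖φ^[m] 0‖) with hr
  have hr1 : r < 1 := by
    rw [hr, Finset.sup'_lt_iff]
    intro m _
    exact mem_ball_zero_iff.1 (ha_ball m)
  obtain ⟨k, hk⟩ := exists_pow_lt_of_lt_one (by norm_num : (0:ℝ) < 1/2) hr1
  set f : ℂ → ℂ := fun z => ((starRingEnd ℂ) z₀ * z)^k with hfdef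
  have hfa : IsDiscAlg f := by
    constructor
    · exact ((continuous_const.mul continuous_id).pow k).continuousOn
    · exact (((differentiable_id.const_mul _).pow k)).differentiableOn
  have hmulnorm : ∀ w : ℂ, ‖(starRingEnd ℂ) z₀ * w‖ = ‖w‖ := by
    intro w
    rw [norm_mul, RCLike.norm_conj, hz₀, one_mul]
  have hfb : ∀ z ∈ closedBall (0:ℂ) 1, ‖f z‖ ≤ 1 := by
    intro z hz
    rw [hfdef]
    simp only [norm_pow, hmulnorm]
    exact pow_le_one₀ (norm_nonneg _) (mem_closedBall_zero_iff.1 hz)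
  have hfz₀ : f z₀ = 1 := by
    have h1 : (starRingEnd ℂ) z₀ * z₀ = 1 := by
      rw [mul_comm, Complex.mul_conj]
      rw [Complex.normSq_eq_norm_sq, hz₀]
      norm_num
    rw [hfdef]
    simp only [h1, one_pow]
  have hbound : ‖cesaro φ f n 0‖ ≤ r ^ k := by
    rw [cesaro]
    have hsum : ‖∑ m ∈ Finset.Icc 1 n, f (φ^[m] 0)‖ ≤ (n : ℝ) * r ^ k := by
      calc ‖∑ m ∈ Finset.Icc 1 n, f (φ^[m] 0)‖
          ≤ ∑ m ∈ Finset.Icc 1 n, ‖f (φ^[m] 0)‖ := norm_sum_le _ _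
        _ ≤ ∑ m ∈ Finset.Icc 1 n, r ^ k := by
            refine Finset.sum_le_sum fun m hm => ?_
            rw [hfdef]
            simp only [norm_pow, hmulnorm]
            exact pow_le_pow_left₀ (norm_nonneg _)
              (Finset.le_sup' (fun m => ‖φ^[m] 0‖) hm) k
        _ = (n : ℝ) * r ^ k := by
            rw [Finset.sum_const, Nat.card_Icc, Nat.add_sub_cancel, nsmul_eq_mul]
    have hnpos : (0:ℝ) < (n : ℝ) := by exact_mod_cast hn1
    calc ‖(n:ℂ)⁻¹ * ∑ m ∈ Finset.Icc 1 n, f (φ^[m] 0)‖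
        = (n:ℝ)⁻¹ * ‖∑ m ∈ Finset.Icc 1 n, f (φ^[m] 0)‖ := by
          rw [norm_mul, norm_inv, Complex.norm_natCast]
      _ ≤ (n:ℝ)⁻¹ * ((n:ℝ) * r ^ k) := by
          exact mul_le_mul_of_nonneg_left hsum (by positivity)
      _ = r ^ k := by field_simp
  have h1 := hN n hnN f hfa hfb 0 (by simp)
  rw [hP0 f hfa hfb, hfz₀] at h1
  have htri : (1:ℝ) ≤ ‖cesaro φ f n 0 - 1‖ + ‖cesaro φ f n 0‖ := by
    calc (1:ℝ) = ‖(1 - cesaro φ f n 0) + cesaro φ f n 0‖ := by norm_num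
      _ ≤ ‖1 - cesaro φ f n 0‖ + ‖cesaro φ f n 0‖ := norm_add_le _ _
      _ = ‖cesaro φ f n 0 - 1‖ + ‖cesaro φ f n 0‖ := by rw [norm_sub_rev]
  linarith
end
end

section
/- Let φ ∈ A(𝔻) be a symbol mapping 𝔻̄ into 𝔻̄ whose iterates φ^n converge to a point z₀ ∈ ∂𝔻 uniformly on the compact subsets of 𝔻 (φ has a boundary Denjoy–Wolff point z₀). Then the following are equivalent: (i) the composition operator C_φ : A(𝔻) → A(𝔻) is mean ergodic; (ii) for every z ∈ ∂𝔻 and every neighborhood U of z₀, the set ℕ_U^{z,φ} = {n ∈ ℕ : φ^n(z) ∈ U} has density dens ℕ_U^{z,φ} = 1; (iii) lim_{n→∞} (1/n) Σ_{m=1}^n (φ^m(z))^j = z₀^j for every z ∈ 𝔻̄ and every positive integer j. -/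
open Metric Set Filter Complex
open scoped Topology Classical

noncomputable section

lemma aux_cesaro {a : ℕ → ℂ} {l : ℂ} (h : Tendsto a atTop (𝓝 l)) :
    Tendsto (fun n : ℕ => (n:ℂ)⁻¹ * ∑ m ∈ Finset.Icc 1 n, a m) atTop (𝓝 l) := by
  have h1 : Tendsto (fun i : ℕ => a (1 + i)) atTop (𝓝 l) := by
    apply h.comp
    exact tendsto_atTop_mono (fun i => Nat.le_add_left i 1) tendsto_id
  have h2 := h1.cesaro_smul
  apply h2.congr
  intro n
  rw [show Finset.Icc 1 n = Finset.Ico 1 (n+1) by rw [Finset.Ico_add_one_right_eq_Icc],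
    Finset.sum_Ico_eq_sum_range]
  simp only [Nat.add_sub_cancel, Complex.real_smul, Complex.ofReal_inv, Complex.ofReal_natCast]

lemma aux_quad {z₀ u : ℂ} (h1 : ‖z₀‖ = 1) (hu : ‖u‖ ≤ 1) :
    ‖u - z₀‖^2 ≤ 2 * (1 - ((starRingEnd ℂ) z₀ * u).re) ∧
    0 ≤ 1 - ((starRingEnd ℂ) z₀ * u).re ∧ 1 - ((starRingEnd ℂ) z₀ * u).re ≤ 2 := by
  have habs : ‖(starRingEnd ℂ) z₀ * u‖ ≤ 1 := by
    rw [norm_mul, Complex.norm_conj]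
    rw [h1, one_mul]
    exact hu
  have hre : ((starRingEnd ℂ) z₀ * u).re ≤ 1 :=
    le_trans (Complex.re_le_norm _) habs
  have hre2 : -1 ≤ ((starRingEnd ℂ) z₀ * u).re := by
    have := Complex.abs_re_le_norm ((starRingEnd ℂ) z₀ * u)
    have := abs_le.mp (le_trans this habs)
    exact this.1
  refine ⟨?_, by linarith, by linarith⟩
  have e1 : ‖u - z₀‖^2 = Complex.normSq (u - z₀) := by
    rw [Complex.sq_norm]
  have e2 : Complex.normSq (u - z₀)
      = Complex.normSq u + Complex.normSq z₀ - 2*((starRingEnd ℂ) z₀ * u).re := by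
    simp [Complex.normSq_apply, Complex.mul_re, Complex.sub_re, Complex.sub_im]; ring
  have e3 : Complex.normSq u ≤ 1 := by
    rw [← Complex.sq_norm]
    nlinarith [norm_nonneg u]
  have e4 : Complex.normSq z₀ = 1 := by
    rw [← Complex.sq_norm, h1]; norm_num
  rw [e1, e2, e4]; linarith

lemma aux_greedy {a : ℕ → ℝ} (h0 : ∀ m, 0 ≤ a m) (h2 : ∀ m, a m ≤ 2) {n T : ℕ} {ε : ℝ}
    (hε : 0 < ε) (hsum : ε * n ≤ ∑ m ∈ Finset.Ioc 0 n, a m) (hn : (4 * T : ℝ) < ε * n) :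
    ∃ j, j + T ≤ n ∧ ∀ t, 1 ≤ t → t ≤ T →
      (ε/2) * t ≤ ∑ m ∈ Finset.Ioc j (j+t), a m := by
  by_contra hcon
  push_neg at hcon
  have hwit : ∀ j, j + T ≤ n → ∃ t, 1 ≤ t ∧ t ≤ T ∧
      ∑ m ∈ Finset.Ioc j (j+t), a m < (ε/2) * t := by
    intro j hj
    obtain ⟨t, h1t, htT, hlt⟩ := hcon j hj
    exact ⟨t, h1t, htT, hlt⟩
  classical
  let step : ℕ → ℕ := fun j => if h : j + T ≤ n then j + (hwit j h).choose else j
  let p : ℕ → ℕ := fun i => step^[i] 0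
  have hps : ∀ i, p (i+1) = step (p i) := by
    intro i; simp only [p, Function.iterate_succ_apply']
  have hinv : ∀ i, p i ≤ n ∧ (∑ m ∈ Finset.Ioc 0 (p i), a m ≤ ε/2 * p i) ∧
      (i ≤ p i ∨ n < p i + T) := by
    intro i
    induction i with
    | zero =>
      refine ⟨Nat.zero_le n, ?_, Or.inl le_rfl⟩
      simp [p]
    | succ i ih =>
      obtain ⟨hle, hsum', hdisj⟩ := ih
      rw [hps i]
      by_cases hcond : p i + T ≤ n
      · have hspec := (hwit (p i) hcond).choose_spec
        set t := (hwit (p i) hcond).choose with ht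
        have hstep : step (p i) = p i + t := by simp only [step, dif_pos hcond]; rfl
        rw [hstep]
        refine ⟨le_trans (by omega) hcond, ?_, ?_⟩
        · have hsplit := Finset.sum_Ioc_consecutive a (Nat.zero_le (p i))
            (Nat.le_add_right (p i) t)
          rw [← hsplit]
          push_cast
          have := hspec.2.2
          push_cast at this ⊢
          linarith [hsum']
        · rcases hdisj with h | h
          · left; omega
          · omega
      · have hstep : step (p i) = p i := by simp only [step, dif_neg hcond]
        rw [hstep]
        exact ⟨hle, hsum', Or.inr (by omega)⟩
  obtain ⟨hPn, hPsum, hPd⟩ := hinv (n+1)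
  set P := p (n+1) with hP
  have hnP : n < P + T := by
    rcases hPd with h | h
    · omega
    · exact h
  have hsplit := Finset.sum_Ioc_consecutive a (Nat.zero_le P) hPn
  have htail : ∑ m ∈ Finset.Ioc P n, a m ≤ 2 * (n - P : ℕ) := by
    calc ∑ m ∈ Finset.Ioc P n, a m ≤ ∑ m ∈ Finset.Ioc P n, 2 :=
          Finset.sum_le_sum (fun m _ => h2 m)
      _ = 2 * (n - P : ℕ) := by rw [Finset.sum_const, Nat.card_Ioc]; push_cast; ring
  have hcard : ((n - P : ℕ) : ℝ) ≤ T := by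
    have : n - P ≤ T := by omega
    exact_mod_cast this
  have hPle : (P : ℝ) ≤ n := by exact_mod_cast hPn
  have : ε * n ≤ ε/2 * n + 2 * T := by
    calc ε * n ≤ ∑ m ∈ Finset.Ioc 0 n, a m := hsum
      _ = ∑ m ∈ Finset.Ioc 0 P, a m + ∑ m ∈ Finset.Ioc P n, a m := hsplit.symm
      _ ≤ ε/2 * P + 2 * (n - P : ℕ) := by linarith [hPsum, htail]
      _ ≤ ε/2 * n + 2 * T := by nlinarith
  linarith

lemma aux_stepC {φ : ℂ → ℂ} {w : ℂ → ℝ}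
    (hmaps : ∀ m : ℕ, MapsTo (φ^[m]) (closedBall (0:ℂ) 1) (closedBall (0:ℂ) 1))
    (hφc : ∀ m : ℕ, ContinuousOn (φ^[m]) (closedBall (0:ℂ) 1))
    (hwc : Continuous w)
    (hw0 : ∀ z ∈ closedBall (0:ℂ) 1, 0 ≤ w z)
    (hw2 : ∀ z ∈ closedBall (0:ℂ) 1, w z ≤ 2)
    (hptw : ∀ z ∈ closedBall (0:ℂ) 1,
      Tendsto (fun n : ℕ => (n:ℝ)⁻¹ * ∑ m ∈ Finset.Ioc 0 n, w (φ^[m] z)) atTop (𝓝 0)) :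
    TendstoUniformlyOn (fun (n:ℕ) z => (n:ℝ)⁻¹ * ∑ m ∈ Finset.Ioc 0 n, w (φ^[m] z))
      (fun _ => 0) atTop (closedBall (0:ℂ) 1) := by
  set S := closedBall (0:ℂ) 1 with hS
  rw [Metric.tendstoUniformlyOn_iff]
  by_contra hcon
  push_neg at hcon
  obtain ⟨ε, hε, hfreq⟩ := hcon
  have horb : ∀ (z : ℂ), z ∈ S → ∀ m, 0 ≤ w (φ^[m] z) ∧ w (φ^[m] z) ≤ 2 := by
    intro z hz m
    exact ⟨hw0 _ (hmaps m hz), hw2 _ (hmaps m hz)⟩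
  have hKey : ∀ T : ℕ, ∃ y ∈ S, ∀ t : ℕ, 1 ≤ t → t ≤ T + 1 →
      (ε/2) * t ≤ ∑ m ∈ Finset.Ioc 0 t, w (φ^[m] y) := by
    intro T
    set N : ℕ := ⌈(4 * (T+1) : ℝ)/ε⌉₊ + 1 with hN
    obtain ⟨n, hnN, hnwit⟩ := (frequently_atTop.mp hfreq) N
    obtain ⟨z, hzS, hdist⟩ := hnwit
    have hn1 : 1 ≤ n := le_trans (by omega) hnN
    have hnpos : (0:ℝ) < n := by exact_mod_cast hn1
    have hu0 : 0 ≤ (n:ℝ)⁻¹ * ∑ m ∈ Finset.Ioc 0 n, w (φ^[m] z) := by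
      apply mul_nonneg (by positivity)
      exact Finset.sum_nonneg (fun m _ => (horb z hzS m).1)
    have hdist' : ε ≤ (n:ℝ)⁻¹ * ∑ m ∈ Finset.Ioc 0 n, w (φ^[m] z) := by
      rw [Real.dist_eq, zero_sub, abs_neg, _root_.abs_of_nonneg hu0] at hdist
      linarith [hdist]
    have hsum : ε * n ≤ ∑ m ∈ Finset.Ioc 0 n, w (φ^[m] z) := by
      have := mul_le_mul_of_nonneg_right hdist' (le_of_lt hnpos)
      calc ε * n ≤ ((n:ℝ)⁻¹ * ∑ m ∈ Finset.Ioc 0 n, w (φ^[m] z)) * n := this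
        _ = ∑ m ∈ Finset.Ioc 0 n, w (φ^[m] z) := by field_simp
    have hbig : (4 * (T+1) : ℝ) < ε * n := by
      have h1 : (4 * (T+1) : ℝ)/ε < N := by
        have hle := Nat.le_ceil ((4 * (T+1) : ℝ)/ε)
        have hlt : ((⌈(4 * (T+1) : ℝ)/ε⌉₊ : ℝ)) < N := by
          rw [hN]; push_cast; linarith
        linarith
      have h2 : (N:ℝ) ≤ n := by exact_mod_cast hnN
      calc (4 * (T+1) : ℝ) = ((4 * (T+1))/ε) * ε := by field_simp
        _ < (N:ℝ) * ε := by apply mul_lt_mul_of_pos_right h1 hε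
        _ ≤ n * ε := by nlinarith
        _ = ε * n := by ring
    obtain ⟨j, hjn, hwin⟩ := aux_greedy (fun m => (horb z hzS m).1)
      (fun m => (horb z hzS m).2) hε hsum (by exact_mod_cast hbig)
    refine ⟨φ^[j] z, hmaps j hzS, ?_⟩
    intro t h1t htT
    have hre : ∑ m ∈ Finset.Ioc 0 t, w (φ^[m] (φ^[j] z))
        = ∑ m ∈ Finset.Ioc j (j+t), w (φ^[m] z) := by
      have hmap : Finset.Ioc j (j+t) = Finset.map (addLeftEmbedding j) (Finset.Ioc 0 t) := by
        rw [Finset.map_add_left_Ioc, add_zero]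
      rw [hmap, Finset.sum_map]
      apply Finset.sum_congr rfl
      intro m _
      simp only [addLeftEmbedding_apply]
      rw [add_comm j m, Function.iterate_add_apply]
    rw [hre]
    exact hwin t h1t htT
  choose Y hYS hYwin using hKey
  obtain ⟨y, hyS, γ, hγ, hconv⟩ := (isCompact_closedBall (0:ℂ) 1).tendsto_subseq hYS
  have hfinal : ∀ t : ℕ, 1 ≤ t → (ε/2) * t ≤ ∑ m ∈ Finset.Ioc 0 t, w (φ^[m] y) := by
    intro t h1t
    have hcontG : ContinuousOn (fun u => ∑ m ∈ Finset.Ioc 0 t, w (φ^[m] u)) S :=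
      continuousOn_finset_sum _ (fun m _ => hwc.comp_continuousOn (hφc m))
    have htnd : Tendsto (fun i => ∑ m ∈ Finset.Ioc 0 t, w (φ^[m] (Y (γ i)))) atTop
        (𝓝 (∑ m ∈ Finset.Ioc 0 t, w (φ^[m] y))) := by
      apply ((hcontG y hyS).tendsto).comp
      rw [tendsto_nhdsWithin_iff]
      exact ⟨hconv, Filter.Eventually.of_forall (fun i => hYS (γ i))⟩
    apply ge_of_tendsto htnd
    filter_upwards [Filter.eventually_ge_atTop t] with i hi
    apply hYwin (γ i) t h1t
    have : i ≤ γ i := hγ.le_apply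
    omega
  have hlim := hptw y hyS
  have : ε/2 ≤ 0 := by
    apply ge_of_tendsto hlim
    filter_upwards [Filter.eventually_ge_atTop 1] with t ht
    have h := hfinal t ht
    have htpos : (0:ℝ) < t := by exact_mod_cast ht
    rw [le_inv_mul_iff₀ htpos]
    linarith [h, mul_comm (t:ℝ) (ε/2)]
  linarith

lemma aux_wmean {φ : ℂ → ℂ} {z₀ z : ℂ} (hz₀ : ‖z₀‖ = 1)
    (h : Tendsto (fun n : ℕ => (n:ℂ)⁻¹ * ∑ m ∈ Finset.Icc 1 n, (φ^[m] z)) atTop (𝓝 z₀)) :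
    Tendsto (fun n : ℕ => (n:ℝ)⁻¹ *
        ∑ m ∈ Finset.Ioc 0 n, (1 - ((starRingEnd ℂ) z₀ * (φ^[m] z)).re))
      atTop (𝓝 0) := by
  set c : ℂ := (starRingEnd ℂ) z₀ with hc
  have h1 : Tendsto (fun n : ℕ => c * ((n:ℂ)⁻¹ * ∑ m ∈ Finset.Icc 1 n, (φ^[m] z)))
      atTop (𝓝 (c * z₀)) := h.const_mul c
  have hre : Tendsto (fun n : ℕ => (c * ((n:ℂ)⁻¹ * ∑ m ∈ Finset.Icc 1 n, (φ^[m] z))).re)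
      atTop (𝓝 ((c * z₀).re)) := (Complex.continuous_re.tendsto _).comp h1
  have hval : (c * z₀).re = 1 := by
    rw [hc, mul_comm, Complex.mul_conj]
    simp only [Complex.ofReal_re]
    rw [← Complex.sq_norm, hz₀]; norm_num
  have h2 : Tendsto (fun n : ℕ => 1 - (c * ((n:ℂ)⁻¹ * ∑ m ∈ Finset.Icc 1 n, (φ^[m] z))).re)
      atTop (𝓝 0) := by
    have hh := (tendsto_const_nhds (x := (1:ℝ))).sub hre
    rw [hval, sub_self] at hh
    exact hh
  apply h2.congr'
  filter_upwards [Filter.eventually_ge_atTop 1] with n hn1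
  have hn0 : (n:ℝ) ≠ 0 := by positivity
  have hIoc : Finset.Icc 1 n = Finset.Ioc 0 n := Finset.Icc_add_one_left_eq_Ioc 0 n
  rw [hIoc] at *
  have e1 : ∑ m ∈ Finset.Ioc 0 n, (1 - (c * (φ^[m] z)).re)
      = (n:ℝ) - ∑ m ∈ Finset.Ioc 0 n, (c * (φ^[m] z)).re := by
    rw [Finset.sum_sub_distrib, Finset.sum_const, Nat.card_Ioc]
    simp
  have e2 : ∑ m ∈ Finset.Ioc 0 n, (c * (φ^[m] z)).re
      = (c * ∑ m ∈ Finset.Ioc 0 n, (φ^[m] z)).re := by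
    rw [Finset.mul_sum, Complex.re_sum]
  have e3 : c * ((n:ℂ)⁻¹ * ∑ m ∈ Finset.Ioc 0 n, (φ^[m] z))
      = (((n:ℝ)⁻¹ : ℝ) : ℂ) * (c * ∑ m ∈ Finset.Ioc 0 n, (φ^[m] z)) := by
    push_cast
    ring
  rw [e3, Complex.re_ofReal_mul, e1, e2]
  field_simp

/-- **Boundary Denjoy–Wolff point: characterization of mean ergodicity on `A(𝔻)`.** Let
`φ ∈ A(𝔻)` map `𝔻̄` into `𝔻̄` with Denjoy–Wolff point `z₀ ∈ ∂𝔻`. Then the following are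
equivalent: (i) `C_φ` is mean ergodic on `A(𝔻)`; (ii) for every `z ∈ ∂𝔻` and every
neighborhood `U` of `z₀`, the set `{n : φ^n(z) ∈ U}` has density `1`; (iii)
`(1/n) ∑_{m=1}^n (φ^m(z))^j → z₀^j` for every `z ∈ 𝔻̄` and every positive integer `j`. -/
theorem stmt_11 (φ : ℂ → ℂ) (hφa : IsDiscAlg φ)
    (hφm : MapsTo φ (closedBall (0:ℂ) 1) (closedBall (0:ℂ) 1))
    (hφb : MapsTo φ (ball (0:ℂ) 1) (ball (0:ℂ) 1))
    (z₀ : ℂ) (hz₀ : ‖z₀‖ = 1)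
    (hDW : TendstoLocallyUniformlyOn (fun (n : ℕ) (z : ℂ) => φ^[n] z) (fun _ => z₀)
      atTop (ball (0:ℂ) 1)) :
    (MeanErgodicDiscAlg φ ↔
      ∀ z : ℂ, ‖z‖ = 1 → ∀ U ∈ 𝓝 z₀, HasDensityOne {n : ℕ | φ^[n] z ∈ U}) ∧
    (MeanErgodicDiscAlg φ ↔
      ∀ z ∈ closedBall (0:ℂ) 1, ∀ j : ℕ, 0 < j →
        Tendsto (fun n : ℕ => (n : ℂ)⁻¹ * ∑ m ∈ Finset.Icc 1 n, (φ^[m] z) ^ j)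
          atTop (𝓝 (z₀ ^ j))) := by

  classical
  have hz₀S : z₀ ∈ closedBall (0:ℂ) 1 := by
    rw [mem_closedBall_zero_iff]; exact le_of_eq hz₀
  have hmaps : ∀ m : ℕ, MapsTo (φ^[m]) (closedBall (0:ℂ) 1) (closedBall (0:ℂ) 1) :=
    fun m => hφm.iterate m
  have hcont : ∀ m : ℕ, ContinuousOn (φ^[m]) (closedBall (0:ℂ) 1) := by
    intro m
    induction m with
    | zero => simpa using continuousOn_id
    | succ m ih =>
      rw [Function.iterate_succ']
      exact hφa.1.comp ih (hmaps m)
  have hnorm : ∀ (m : ℕ) (z : ℂ), z ∈ closedBall (0:ℂ) 1 → ‖φ^[m] z‖ ≤ 1 :=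
    fun m z hz => mem_closedBall_zero_iff.mp (hmaps m hz)
  have hpt : ∀ z ∈ ball (0:ℂ) 1, Tendsto (fun m : ℕ => φ^[m] z) atTop (𝓝 z₀) :=
    fun z hz => hDW.tendsto_at hz
  have hP3ball : ∀ z ∈ ball (0:ℂ) 1, ∀ j : ℕ, 0 < j →
      Tendsto (fun n : ℕ => (n:ℂ)⁻¹ * ∑ m ∈ Finset.Icc 1 n, (φ^[m] z)^j)
        atTop (𝓝 (z₀^j)) := by
    intro z hz j _
    exact aux_cesaro ((hpt z hz).pow j)
  have hcescont : ∀ (f : ℂ → ℂ), ContinuousOn f (closedBall (0:ℂ) 1) → ∀ n : ℕ,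
      ContinuousOn (cesaro φ f n) (closedBall (0:ℂ) 1) := by
    intro f hfc n
    unfold cesaro
    apply ContinuousOn.mul continuousOn_const
    apply continuousOn_finset_sum
    intro m _
    exact hfc.comp (hcont m) (hmaps m)
  -- (i) → (iii)
  have hP1P3 : MeanErgodicDiscAlg φ →
      ∀ z ∈ closedBall (0:ℂ) 1, ∀ j : ℕ, 0 < j →
        Tendsto (fun n : ℕ => (n : ℂ)⁻¹ * ∑ m ∈ Finset.Icc 1 n, (φ^[m] z) ^ j)
          atTop (𝓝 (z₀ ^ j)) := by
    intro h z hzS j hj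
    obtain ⟨g, hg⟩ := h (fun w => w^j)
      ⟨(continuous_pow j).continuousOn, (differentiable_pow j).differentiableOn⟩
    have hgpt : ∀ u ∈ ball (0:ℂ) 1, g u = z₀^j := by
      intro u hu
      exact tendsto_nhds_unique (hg.tendsto_at (ball_subset_closedBall hu))
        (hP3ball u hu j hj)
    have hgc : ContinuousOn g (closedBall (0:ℂ) 1) := by
      apply hg.continuousOn
      refine Filter.Frequently.of_forall fun n => ?_
      exact hcescont _ (continuous_pow j).continuousOn n
    have hgz : g z = z₀^j := by
      by_cases hzb : z ∈ ball (0:ℂ) 1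
      · exact hgpt z hzb
      · have hz1 : ‖z‖ ≤ 1 := mem_closedBall_zero_iff.mp hzS
        set r : ℕ → ℝ := fun i => ((i:ℝ)+1)/((i:ℝ)+2) with hr
        have hr01 : ∀ i, 0 ≤ r i ∧ r i < 1 := by
          intro i
          constructor
          · positivity
          · rw [hr, div_lt_one (by positivity)]; linarith
        have hmem : ∀ i, (r i) • z ∈ ball (0:ℂ) 1 := by
          intro i
          rw [mem_ball_zero_iff, norm_smul, Real.norm_eq_abs,
            _root_.abs_of_nonneg (hr01 i).1]
          calc r i * ‖z‖ ≤ r i * 1 := by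
                have := (hr01 i).1; nlinarith [hz1]
            _ < 1 := by rw [mul_one]; exact (hr01 i).2
        have hrlim : Tendsto r atTop (𝓝 1) := by
          have ha : Tendsto (fun i : ℕ => ((i:ℝ)+2)) atTop atTop :=
            tendsto_atTop_add_const_right _ 2 tendsto_natCast_atTop_atTop
          have hb : Tendsto (fun i : ℕ => ((i:ℝ)+2)⁻¹) atTop (𝓝 0) :=
            ha.inv_tendsto_atTop
          have hc : Tendsto (fun i : ℕ => 1 - ((i:ℝ)+2)⁻¹) atTop (𝓝 1) := by
            have := (tendsto_const_nhds (x := (1:ℝ))).sub hb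
            rw [sub_zero] at this
            exact this
          apply hc.congr
          intro i
          rw [hr]
          field_simp
          ring
        have hzlim : Tendsto (fun i => (r i) • z) atTop (𝓝 z) := by
          have := hrlim.smul_const z
          rw [one_smul] at this
          exact this
        have hcomp : Tendsto (fun i => g ((r i) • z)) atTop (𝓝 (g z)) := by
          apply ((hgc z hzS).tendsto).comp
          rw [tendsto_nhdsWithin_iff]
          exact ⟨hzlim, Filter.Eventually.of_forall
            (fun i => ball_subset_closedBall (hmem i))⟩
        have hconst : (fun i => g ((r i) • z)) = fun _ => z₀^j :=
          funext fun i => hgpt _ (hmem i)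
        rw [hconst] at hcomp
        exact tendsto_nhds_unique hcomp tendsto_const_nhds
    have hfin := hg.tendsto_at hzS
    rw [hgz] at hfin
    exact hfin

  -- (iii) → (ii)
  have hP3P2 : (∀ z ∈ closedBall (0:ℂ) 1, ∀ j : ℕ, 0 < j →
      Tendsto (fun n : ℕ => (n : ℂ)⁻¹ * ∑ m ∈ Finset.Icc 1 n, (φ^[m] z) ^ j)
        atTop (𝓝 (z₀ ^ j))) →
      ∀ z : ℂ, ‖z‖ = 1 → ∀ U ∈ 𝓝 z₀, HasDensityOne {n : ℕ | φ^[n] z ∈ U} := by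
    intro h z hz U hU
    have hzS : z ∈ closedBall (0:ℂ) 1 := mem_closedBall_zero_iff.mpr (le_of_eq hz)
    obtain ⟨δ, hδ, hδU⟩ := Metric.mem_nhds_iff.mp hU
    have h1 := h z hzS 1 one_pos
    simp only [pow_one] at h1
    have hwm := aux_wmean hz₀ h1
    set bad : ℕ → Finset ℕ :=
      fun n => (Finset.Ioc 0 n).filter (fun m => φ^[m] z ∉ U) with hbadd
    have hmark : ∀ n : ℕ, ((bad n).card : ℝ) * (δ^2/2) ≤
        ∑ m ∈ Finset.Ioc 0 n, (1 - ((starRingEnd ℂ) z₀ * (φ^[m] z)).re) := by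
      intro n
      have hsub : ∀ m ∈ bad n, δ^2/2 ≤ 1 - ((starRingEnd ℂ) z₀ * (φ^[m] z)).re := by
        intro m hm
        obtain ⟨_, hm2⟩ := Finset.mem_filter.mp hm
        have hq := aux_quad hz₀ (hnorm m z hzS)
        have hdist : δ ≤ ‖φ^[m] z - z₀‖ := by
          by_contra hlt
          push_neg at hlt
          exact hm2 (hδU (by rw [mem_ball, dist_eq_norm]; exact hlt))
        nlinarith [hq.1, hq.2.1]
      calc ((bad n).card : ℝ) * (δ^2/2) = ∑ _m ∈ bad n, δ^2/2 := by
            rw [Finset.sum_const, nsmul_eq_mul]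
        _ ≤ ∑ m ∈ bad n, (1 - ((starRingEnd ℂ) z₀ * (φ^[m] z)).re) :=
            Finset.sum_le_sum hsub
        _ ≤ ∑ m ∈ Finset.Ioc 0 n, (1 - ((starRingEnd ℂ) z₀ * (φ^[m] z)).re) :=
            Finset.sum_le_sum_of_subset_of_nonneg (Finset.filter_subset _ _)
              (fun m _ _ => (aux_quad hz₀ (hnorm m z hzS)).2.1)
    have hbadlim : Tendsto (fun n : ℕ => ((bad n).card : ℝ) / n) atTop (𝓝 0) := by
      have hupper : Tendsto (fun n : ℕ => (2/δ^2) * ((n:ℝ)⁻¹ *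
          ∑ m ∈ Finset.Ioc 0 n, (1 - ((starRingEnd ℂ) z₀ * (φ^[m] z)).re)))
          atTop (𝓝 0) := by
        have := hwm.const_mul (2/δ^2)
        rw [mul_zero] at this
        exact this
      apply tendsto_of_tendsto_of_tendsto_of_le_of_le' tendsto_const_nhds hupper
      · filter_upwards with n
        positivity
      · filter_upwards [Filter.eventually_ge_atTop 1] with n hn1
        have hn0 : (0:ℝ) < n := by exact_mod_cast hn1
        set Sn := ∑ m ∈ Finset.Ioc 0 n, (1 - ((starRingEnd ℂ) z₀ * (φ^[m] z)).re) with hSn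
        have hd2 : (0:ℝ) < δ^2 := by positivity
        rw [div_le_iff₀ hn0]
        have h1 : ((bad n).card : ℝ) ≤ (2/δ^2) * Sn := by
          rw [div_mul_eq_mul_div, le_div_iff₀ hd2]
          nlinarith [hmark n]
        have h2 : (2/δ^2) * Sn = ((2/δ^2) * ((n:ℝ)⁻¹ * Sn)) * n := by
          field_simp
        linarith [h1, h2.le]
    unfold HasDensityOne
    have hcard : ∀ N : ℕ, ((N:ℝ)) - ((bad N).card : ℝ) ≤
        (((Finset.range (N + 1)).filter (fun n => n ∈ {n : ℕ | φ^[n] z ∈ U})).card : ℝ) := by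
      intro N
      have hsplit := Finset.card_filter_add_card_filter_not
        (s := Finset.range (N+1)) (fun n => n ∈ {n : ℕ | φ^[n] z ∈ U})
      have hsub : (Finset.range (N+1)).filter
          (fun n => ¬ (n ∈ {n : ℕ | φ^[n] z ∈ U})) ⊆ insert 0 (bad N) := by
        intro m hm
        obtain ⟨hm1, hm2⟩ := Finset.mem_filter.mp hm
        rw [Finset.mem_range] at hm1
        simp only [Set.mem_setOf_eq] at hm2
        by_cases hm0 : m = 0
        · rw [hm0]; exact Finset.mem_insert_self 0 _
        · apply Finset.mem_insert_of_mem
          rw [hbadd, Finset.mem_filter, Finset.mem_Ioc]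
          exact ⟨⟨Nat.pos_of_ne_zero hm0, by omega⟩, hm2⟩
      have hb1 : ((Finset.range (N+1)).filter
          (fun n => ¬ (n ∈ {n : ℕ | φ^[n] z ∈ U}))).card ≤ (bad N).card + 1 := by
        calc _ ≤ (insert 0 (bad N)).card := Finset.card_le_card hsub
          _ ≤ (bad N).card + 1 := Finset.card_insert_le 0 _
      have := hsplit
      have hcc : (N:ℝ) + 1 ≤ (((Finset.range (N + 1)).filter
          (fun n => n ∈ {n : ℕ | φ^[n] z ∈ U})).card : ℝ) + (((bad N).card : ℝ) + 1) := by
        have hq : (N+1 : ℕ) ≤ ((Finset.range (N + 1)).filter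
            (fun n => n ∈ {n : ℕ | φ^[n] z ∈ U})).card + ((bad N).card + 1) := by
          have hEq : ((Finset.range (N+1)).filter
              (fun n => n ∈ {n : ℕ | φ^[n] z ∈ U})).card
              + ((Finset.range (N+1)).filter
              (fun n => ¬ (n ∈ {n : ℕ | φ^[n] z ∈ U}))).card = N + 1 := by
            rw [hsplit, Finset.card_range]
          omega
        exact_mod_cast hq
      linarith
    apply tendsto_of_tendsto_of_tendsto_of_le_of_le'
      (g := fun N : ℕ => 1 - ((bad N).card : ℝ)/N)
      (h := fun N : ℕ => ((N:ℝ)+1)/N)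
    · have := (tendsto_const_nhds (x := (1:ℝ))).sub hbadlim
      rw [sub_zero] at this
      exact this
    · have h1 : Tendsto (fun N : ℕ => 1 + (N:ℝ)⁻¹) atTop (𝓝 1) := by
        have := (tendsto_const_nhds (x := (1:ℝ))).add tendsto_inv_atTop_nhds_zero_nat
        rw [add_zero] at this
        exact this
      apply h1.congr'
      filter_upwards [Filter.eventually_ge_atTop 1] with N hN
      have hN0 : (N:ℝ) ≠ 0 := by positivity
      field_simp
    · filter_upwards [Filter.eventually_ge_atTop 1] with N hN
      have hN0 : (0:ℝ) < N := by exact_mod_cast hN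
      calc 1 - ((bad N).card : ℝ)/N = ((N:ℝ) - ((bad N).card : ℝ))/N := by
            field_simp
        _ ≤ _ := by
            gcongr
            exact hcard N
    · filter_upwards [Filter.eventually_ge_atTop 1] with N hN
      have hN0 : (0:ℝ) < N := by exact_mod_cast hN
      have hgle : (((Finset.range (N + 1)).filter
          (fun n => n ∈ {n : ℕ | φ^[n] z ∈ U})).card : ℝ) ≤ (N:ℝ) + 1 := by
        have hcfl := Finset.card_filter_le (Finset.range (N+1))
          (fun n => n ∈ {n : ℕ | φ^[n] z ∈ U})
        rw [Finset.card_range] at hcfl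
        exact_mod_cast hcfl
      gcongr
      exact hgle

  -- (ii) → (iii)
  have hP2P3 : (∀ z : ℂ, ‖z‖ = 1 → ∀ U ∈ 𝓝 z₀, HasDensityOne {n : ℕ | φ^[n] z ∈ U}) →
      ∀ z ∈ closedBall (0:ℂ) 1, ∀ j : ℕ, 0 < j →
        Tendsto (fun n : ℕ => (n : ℂ)⁻¹ * ∑ m ∈ Finset.Icc 1 n, (φ^[m] z) ^ j)
          atTop (𝓝 (z₀ ^ j)) := by
    intro h z hzS j hj
    rcases lt_or_eq_of_le (mem_closedBall_zero_iff.mp hzS) with hlt | heq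
    · exact hP3ball z (mem_ball_zero_iff.mpr hlt) j hj
    · rw [Metric.tendsto_atTop]
      intro ε hε
      have hca : ContinuousAt (fun u : ℂ => u^j) z₀ := (continuous_pow j).continuousAt
      rw [Metric.continuousAt_iff] at hca
      obtain ⟨δ, hδ, hδc⟩ := hca (ε/4) (by positivity)
      have hdens := h z heq (ball z₀ δ) (ball_mem_nhds z₀ hδ)
      unfold HasDensityOne at hdens
      -- bad counts tend to zero in density
      set badc : ℕ → ℝ := fun n =>
        (((Finset.Ioc 0 n).filter (fun m => φ^[m] z ∉ ball z₀ δ)).card : ℝ) with hbadc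
      have hbad0 : Tendsto (fun n : ℕ => badc n / n) atTop (𝓝 0) := by
        have hup : Tendsto (fun n : ℕ => (1 + (n:ℝ)⁻¹) -
            ((((Finset.range (n + 1)).filter
              (fun m => m ∈ {k : ℕ | φ^[k] z ∈ ball z₀ δ})).card : ℝ) / n))
            atTop (𝓝 0) := by
          have h1 : Tendsto (fun n : ℕ => 1 + (n:ℝ)⁻¹) atTop (𝓝 1) := by
            have := (tendsto_const_nhds (x := (1:ℝ))).add tendsto_inv_atTop_nhds_zero_nat
            rw [add_zero] at this
            exact this
          have := h1.sub hdens
          rw [sub_self] at this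
          exact this
        apply tendsto_of_tendsto_of_tendsto_of_le_of_le' tendsto_const_nhds hup
        · filter_upwards with n
          positivity
        · filter_upwards [Filter.eventually_ge_atTop 1] with n hn1
          have hn0 : (0:ℝ) < n := by exact_mod_cast hn1
          -- badc n ≤ (n+1) - goodcard
          have hsplit := Finset.card_filter_add_card_filter_not
            (s := Finset.range (n+1)) (fun m => m ∈ {k : ℕ | φ^[k] z ∈ ball z₀ δ})
          have hsub : (Finset.Ioc 0 n).filter (fun m => φ^[m] z ∉ ball z₀ δ) ⊆
              (Finset.range (n+1)).filter
                (fun m => ¬ (m ∈ {k : ℕ | φ^[k] z ∈ ball z₀ δ})) := by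
            intro m hm
            obtain ⟨hm1, hm2⟩ := Finset.mem_filter.mp hm
            rw [Finset.mem_Ioc] at hm1
            rw [Finset.mem_filter, Finset.mem_range]
            exact ⟨by omega, hm2⟩
          have hc1 : badc n ≤ (n:ℝ) + 1 - (((Finset.range (n + 1)).filter
              (fun m => m ∈ {k : ℕ | φ^[k] z ∈ ball z₀ δ})).card : ℝ) := by
            have hle := Finset.card_le_card hsub
            have hEq : ((Finset.range (n+1)).filter
                (fun m => m ∈ {k : ℕ | φ^[k] z ∈ ball z₀ δ})).card
                + ((Finset.range (n+1)).filter
                (fun m => ¬ (m ∈ {k : ℕ | φ^[k] z ∈ ball z₀ δ}))).card = n + 1 := by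
              rw [hsplit, Finset.card_range]
            rw [hbadc]
            have hnat : (((Finset.Ioc 0 n).filter (fun m => φ^[m] z ∉ ball z₀ δ)).card)
                + ((Finset.range (n+1)).filter
                  (fun m => m ∈ {k : ℕ | φ^[k] z ∈ ball z₀ δ})).card ≤ n + 1 := by omega
            have hcast := @Nat.cast_le ℝ _ _ _ |>.mpr hnat
            push_cast at hcast
            linarith [hcast]
          calc badc n / n ≤ ((n:ℝ) + 1 - (((Finset.range (n + 1)).filter
              (fun m => m ∈ {k : ℕ | φ^[k] z ∈ ball z₀ δ})).card : ℝ))/n := by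
                gcongr
            _ = (1 + (n:ℝ)⁻¹) - (((Finset.range (n + 1)).filter
              (fun m => m ∈ {k : ℕ | φ^[k] z ∈ ball z₀ δ})).card : ℝ)/n := by
                rw [sub_div, add_div]
                rw [div_self (ne_of_gt hn0), one_div]
      -- main estimate
      obtain ⟨N1, hN1⟩ := (Metric.tendsto_atTop.mp hbad0) (ε/8) (by positivity)
      refine ⟨max N1 1, fun n hn => ?_⟩
      have hn1 : 1 ≤ n := le_trans (le_max_right _ _) hn
      have hnN1 : N1 ≤ n := le_trans (le_max_left _ _) hn
      have hn0 : (0:ℝ) < n := by exact_mod_cast hn1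
      have hb := hN1 n hnN1
      rw [Real.dist_eq, sub_zero, _root_.abs_of_nonneg (by positivity)] at hb
      have hnne : (n:ℂ) ≠ 0 := by
        exact_mod_cast Nat.cast_ne_zero.mpr (by omega)
      have hrw : (n:ℂ)⁻¹ * ∑ m ∈ Finset.Icc 1 n, (φ^[m] z)^j - z₀^j
          = (n:ℂ)⁻¹ * ∑ m ∈ Finset.Icc 1 n, ((φ^[m] z)^j - z₀^j) := by
        rw [Finset.sum_sub_distrib, mul_sub]
        congr 1
        rw [Finset.sum_const, Nat.card_Icc, nsmul_eq_mul]
        push_cast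
        field_simp
      rw [dist_eq_norm, hrw]
      have hnormle : ‖(n:ℂ)⁻¹ * ∑ m ∈ Finset.Icc 1 n, ((φ^[m] z)^j - z₀^j)‖
          ≤ (n:ℝ)⁻¹ * ∑ m ∈ Finset.Icc 1 n, ‖(φ^[m] z)^j - z₀^j‖ := by
        rw [norm_mul, norm_inv, Complex.norm_natCast]
        gcongr
        exact norm_sum_le _ _
      have hterm : ∀ m ∈ Finset.Icc 1 n, ‖(φ^[m] z)^j - z₀^j‖
          ≤ ε/4 + (if φ^[m] z ∈ ball z₀ δ then (0:ℝ) else 2) := by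
        intro m _
        by_cases hmem : φ^[m] z ∈ ball z₀ δ
        · rw [if_pos hmem, add_zero]
          have hd := hδc (mem_ball.mp hmem)
          rw [dist_eq_norm] at hd
          linarith
        · rw [if_neg hmem]
          have h1 : ‖(φ^[m] z)^j‖ ≤ 1 := by
            rw [norm_pow]
            exact pow_le_one₀ (norm_nonneg _) (hnorm m z hzS)
          have h2 : ‖z₀^j‖ = 1 := by rw [norm_pow, hz₀, one_pow]
          calc ‖(φ^[m] z)^j - z₀^j‖ ≤ ‖(φ^[m] z)^j‖ + ‖z₀^j‖ := norm_sub_le _ _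
            _ ≤ 2 := by rw [h2]; linarith
            _ ≤ ε/4 + 2 := by linarith
      have hsum2 : ∑ m ∈ Finset.Icc 1 n, ‖(φ^[m] z)^j - z₀^j‖
          ≤ (ε/4) * n + 2 * badc n := by
        calc ∑ m ∈ Finset.Icc 1 n, ‖(φ^[m] z)^j - z₀^j‖
            ≤ ∑ m ∈ Finset.Icc 1 n, (ε/4 + (if φ^[m] z ∈ ball z₀ δ then (0:ℝ) else 2)) :=
              Finset.sum_le_sum hterm
          _ = (ε/4) * n + ∑ m ∈ Finset.Icc 1 n,
              (if φ^[m] z ∈ ball z₀ δ then (0:ℝ) else 2) := by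
              rw [Finset.sum_add_distrib, Finset.sum_const, Nat.card_Icc, nsmul_eq_mul]
              push_cast
              ring
          _ = (ε/4) * n + 2 * badc n := by
              congr 1
              rw [show Finset.Icc 1 n = Finset.Ioc 0 n from Finset.Icc_add_one_left_eq_Ioc 0 n]
              rw [Finset.sum_ite, Finset.sum_const, Finset.sum_const, hbadc]
              simp [mul_comm]
      have hS0 : 0 ≤ ∑ m ∈ Finset.Icc 1 n, ‖(φ^[m] z)^j - z₀^j‖ :=
        Finset.sum_nonneg (fun m _ => norm_nonneg _)
      have hfin2 : (n:ℝ)⁻¹ * ∑ m ∈ Finset.Icc 1 n, ‖(φ^[m] z)^j - z₀^j‖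
          ≤ ε/4 + 2 * (badc n / n) := by
        have hn0ne : (n:ℝ) ≠ 0 := ne_of_gt hn0
        have heq2 : ε/4 + 2 * (badc n / n) = (n:ℝ)⁻¹ * ((ε/4) * n + 2 * badc n) := by
          field_simp [hn0ne]
          try ring
          try exact Or.inl trivial
        rw [heq2]
        gcongr
      calc ‖(n:ℂ)⁻¹ * ∑ m ∈ Finset.Icc 1 n, ((φ^[m] z)^j - z₀^j)‖
          ≤ (n:ℝ)⁻¹ * ∑ m ∈ Finset.Icc 1 n, ‖(φ^[m] z)^j - z₀^j‖ := hnormle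
        _ ≤ ε/4 + 2 * (badc n / n) := hfin2
        _ < ε/4 + 2 * (ε/8) := by linarith
        _ < ε := by linarith

  -- (iii) → (i)
  have hP3P1 : (∀ z ∈ closedBall (0:ℂ) 1, ∀ j : ℕ, 0 < j →
      Tendsto (fun n : ℕ => (n : ℂ)⁻¹ * ∑ m ∈ Finset.Icc 1 n, (φ^[m] z) ^ j)
        atTop (𝓝 (z₀ ^ j))) → MeanErgodicDiscAlg φ := by
    intro h f hf
    refine ⟨fun _ => f z₀, ?_⟩
    -- uniform convergence of the w-averages
    have hwpt : ∀ z ∈ closedBall (0:ℂ) 1,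
        Tendsto (fun n : ℕ => (n:ℝ)⁻¹ *
          ∑ m ∈ Finset.Ioc 0 n, (1 - ((starRingEnd ℂ) z₀ * (φ^[m] z)).re))
          atTop (𝓝 0) := by
      intro z hzS
      have h1 := h z hzS 1 one_pos
      simp only [pow_one] at h1
      exact aux_wmean hz₀ h1
    have hwcont : Continuous (fun u : ℂ => 1 - ((starRingEnd ℂ) z₀ * u).re) :=
      continuous_const.sub (Complex.continuous_re.comp (continuous_const.mul continuous_id))
    have hwuni := aux_stepC hmaps hcont hwcont
      (fun z hz => (aux_quad hz₀ (mem_closedBall_zero_iff.mp hz)).2.1)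
      (fun z hz => (aux_quad hz₀ (mem_closedBall_zero_iff.mp hz)).2.2)
      hwpt
    rw [Metric.tendstoUniformlyOn_iff] at hwuni ⊢
    intro ε hε
    obtain ⟨M, hM⟩ := (isCompact_closedBall (0:ℂ) 1).exists_bound_of_continuousOn hf.1
    have hM0 : 0 ≤ M := le_trans (norm_nonneg _) (hM z₀ hz₀S)
    have hcw := (Metric.continuousWithinAt_iff.mp ((hf.1) z₀ hz₀S)) (ε/4) (by positivity)
    obtain ⟨δ, hδ, hδc⟩ := hcw
    set C : ℝ := (2*M + 2)/(δ^2/2) with hC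
    have hC0 : 0 < C := by positivity
    have hest : ∀ u ∈ closedBall (0:ℂ) 1,
        ‖f u - f z₀‖ ≤ ε/4 + C * (1 - ((starRingEnd ℂ) z₀ * u).re) := by
      intro u huS
      have hq := aux_quad hz₀ (mem_closedBall_zero_iff.mp huS)
      have hCre : 0 ≤ C * (1 - ((starRingEnd ℂ) z₀ * u).re) :=
        mul_nonneg (le_of_lt hC0) hq.2.1
      by_cases hu : dist u z₀ < δ
      · have hd := hδc huS hu
        rw [dist_eq_norm] at hd
        linarith
      · push_neg at hu
        rw [dist_eq_norm] at hu
        have h1 : δ^2 ≤ ‖u - z₀‖^2 := by nlinarith [norm_nonneg (u - z₀), hδ]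
        have h2 : δ^2/2 ≤ 1 - ((starRingEnd ℂ) z₀ * u).re := by nlinarith [hq.1]
        have h3 : ‖f u - f z₀‖ ≤ 2*M + 2 := by
          calc ‖f u - f z₀‖ ≤ ‖f u‖ + ‖f z₀‖ := norm_sub_le _ _
            _ ≤ M + M := add_le_add (hM u huS) (hM z₀ hz₀S)
            _ ≤ 2*M + 2 := by linarith
        have hD : (δ^2/2) ≠ 0 := by positivity
        have h4 : 2*M + 2 ≤ C * (1 - ((starRingEnd ℂ) z₀ * u).re) := by
          calc 2*M + 2 = C * (δ^2/2) := by rw [hC, div_mul_cancel₀ _ hD]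
            _ ≤ C * (1 - ((starRingEnd ℂ) z₀ * u).re) :=
                mul_le_mul_of_nonneg_left h2 (le_of_lt hC0)
        linarith
    have hw2 := hwuni (ε/(4*C)) (by positivity)
    filter_upwards [hw2, Filter.eventually_ge_atTop 1] with n hn hn1
    intro x hxS
    have hn0 : (0:ℝ) < n := by exact_mod_cast hn1
    have hn0ne : (n:ℝ) ≠ 0 := ne_of_gt hn0
    have hnne : (n:ℂ) ≠ 0 := by exact_mod_cast Nat.cast_ne_zero.mpr (by omega)
    set Sx : ℝ := ∑ m ∈ Finset.Ioc 0 n,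
      (1 - ((starRingEnd ℂ) z₀ * (φ^[m] x)).re) with hSx
    have hux := hn x hxS
    have hu0 : 0 ≤ (n:ℝ)⁻¹ * Sx := by
      apply mul_nonneg (by positivity)
      exact Finset.sum_nonneg
        (fun m _ => (aux_quad hz₀ (hnorm m x hxS)).2.1)
    rw [Real.dist_eq, zero_sub, abs_neg] at hux
    rw [_root_.abs_of_nonneg hu0] at hux
    have hrw : cesaro φ f n x - f z₀
        = (n:ℂ)⁻¹ * ∑ m ∈ Finset.Icc 1 n, (f (φ^[m] x) - f z₀) := by
      unfold cesaro
      rw [Finset.sum_sub_distrib, mul_sub]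
      congr 1
      rw [Finset.sum_const, Nat.card_Icc, nsmul_eq_mul]
      push_cast
      field_simp
    have hnormle : ‖cesaro φ f n x - f z₀‖
        ≤ (n:ℝ)⁻¹ * ∑ m ∈ Finset.Icc 1 n, ‖f (φ^[m] x) - f z₀‖ := by
      rw [hrw, norm_mul, norm_inv, Complex.norm_natCast]
      gcongr
      exact norm_sum_le _ _
    have hsum2 : ∑ m ∈ Finset.Icc 1 n, ‖f (φ^[m] x) - f z₀‖
        ≤ (ε/4) * n + C * Sx := by
      rw [show Finset.Icc 1 n = Finset.Ioc 0 n from Finset.Icc_add_one_left_eq_Ioc 0 n, hSx]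
      calc ∑ m ∈ Finset.Ioc 0 n, ‖f (φ^[m] x) - f z₀‖
          ≤ ∑ m ∈ Finset.Ioc 0 n,
            (ε/4 + C * (1 - ((starRingEnd ℂ) z₀ * (φ^[m] x)).re)) :=
            Finset.sum_le_sum (fun m _ => hest _ (hmaps m hxS))
        _ = (ε/4) * n + C * ∑ m ∈ Finset.Ioc 0 n,
            (1 - ((starRingEnd ℂ) z₀ * (φ^[m] x)).re) := by
            rw [Finset.sum_add_distrib, Finset.sum_const, Nat.card_Ioc, Nat.sub_zero,
              ← Finset.mul_sum, nsmul_eq_mul]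
            ring
    have hkey : ‖cesaro φ f n x - f z₀‖ ≤ ε/4 + C * ((n:ℝ)⁻¹ * Sx) := by
      have heq2 : ε/4 + C * ((n:ℝ)⁻¹ * Sx) = (n:ℝ)⁻¹ * ((ε/4) * n + C * Sx) := by
        field_simp
        try ring
        try exact Or.inl trivial
      rw [heq2]
      calc ‖cesaro φ f n x - f z₀‖
          ≤ (n:ℝ)⁻¹ * ∑ m ∈ Finset.Icc 1 n, ‖f (φ^[m] x) - f z₀‖ := hnormle
        _ ≤ (n:ℝ)⁻¹ * ((ε/4) * n + C * Sx) := by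
            gcongr
    have hux' : C * ((n:ℝ)⁻¹ * Sx) < C * (ε/(4*C)) := mul_lt_mul_of_pos_left hux hC0
    have hCfin : C * (ε/(4*C)) = ε/4 := by
      have hCne : C ≠ 0 := ne_of_gt hC0
      field_simp
    have h5 : C * ((n:ℝ)⁻¹ * Sx) < ε/4 := hCfin ▸ hux'
    have h6 : ε/4 + C * ((n:ℝ)⁻¹ * Sx) < ε/4 + ε/4 := by linarith
    have h7 : ε/4 + ε/4 = ε/2 := by ring
    rw [dist_eq_norm, norm_sub_rev]
    exact lt_of_le_of_lt hkey (lt_of_lt_of_le (h7 ▸ h6) (le_of_lt (half_lt_self hε)))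
  exact ⟨⟨fun h1 => hP3P2 (hP1P3 h1), fun h2 => hP3P1 (hP2P3 h2)⟩, ⟨hP1P3, hP3P1⟩⟩
end
end

section
/- Let φ ∈ A(𝔻) be a symbol mapping 𝔻̄ into 𝔻̄ whose iterates φ^n converge to a point z₀ ∈ ∂𝔻 uniformly on the compact subsets of 𝔻 (z₀ is the Denjoy–Wolff point), and suppose φ extends holomorphically to a neighborhood of z₀ with φ(z₀) = z₀ and |φ'(z₀)| < 1 (φ is hyperbolic and holomorphic near z₀). Then the composition operator C_φ : A(𝔻) → A(𝔻) is mean ergodic if and only if lim_{n→∞} φ^n(z) = z₀ for every z ∈ 𝔻̄. -/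
open Metric Set Filter Complex
open scoped Topology Classical

noncomputable section

private lemma cesaro_bound' (u : ℕ → ℂ) (L : ℂ) (B ε : ℝ) (M : ℕ)
    (hb : ∀ m, ‖u m - L‖ ≤ B) (he : ∀ m, M ≤ m → ‖u m - L‖ ≤ ε)
    (hε : 0 ≤ ε) (n : ℕ) (hn : 1 ≤ n) :
    ‖(n:ℂ)⁻¹ * ∑ m ∈ Finset.Icc 1 n, u m - L‖ ≤ M * B / n + ε := by
  have hB : 0 ≤ B := le_trans (norm_nonneg _) (hb 0)
  have hn0 : (0:ℝ) < n := by exact_mod_cast hn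
  have hnC : (n:ℂ) ≠ 0 := Nat.cast_ne_zero.2 (by omega)
  have hrw : (n:ℂ)⁻¹ * ∑ m ∈ Finset.Icc 1 n, u m - L
      = (n:ℂ)⁻¹ * ∑ m ∈ Finset.Icc 1 n, (u m - L) := by
    rw [Finset.sum_sub_distrib, Finset.sum_const, Nat.card_Icc]
    simp only [Nat.add_sub_cancel, nsmul_eq_mul]
    field_simp
  rw [hrw]
  have hIcc : Finset.Icc 1 n = Finset.Ioc 0 n := Finset.Icc_add_one_left_eq_Ioc 0 n
  have hK : min M n ≤ n := min_le_right _ _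
  have hsplit : (∑ m ∈ Finset.Ioc 0 (min M n), (u m - L))
      + ∑ m ∈ Finset.Ioc (min M n) n, (u m - L) = ∑ m ∈ Finset.Ioc 0 n, (u m - L) :=
    Finset.sum_Ioc_consecutive _ (Nat.zero_le _) hK
  have h1 : ‖∑ m ∈ Finset.Ioc 0 (min M n), (u m - L)‖ ≤ M * B := by
    calc ‖∑ m ∈ Finset.Ioc 0 (min M n), (u m - L)‖
        ≤ ∑ m ∈ Finset.Ioc 0 (min M n), ‖u m - L‖ := norm_sum_le _ _
      _ ≤ (Finset.Ioc 0 (min M n)).card • B :=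
          Finset.sum_le_card_nsmul _ _ _ (fun m _ => hb m)
      _ = (min M n : ℝ) * B := by rw [Nat.card_Ioc]; simp [nsmul_eq_mul]
      _ ≤ M * B := by
          apply mul_le_mul_of_nonneg_right _ hB
          exact_mod_cast min_le_left M n
  have h2 : ‖∑ m ∈ Finset.Ioc (min M n) n, (u m - L)‖ ≤ n * ε := by
    calc ‖∑ m ∈ Finset.Ioc (min M n) n, (u m - L)‖
        ≤ ∑ m ∈ Finset.Ioc (min M n) n, ‖u m - L‖ := norm_sum_le _ _
      _ ≤ (Finset.Ioc (min M n) n).card • ε := by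
          apply Finset.sum_le_card_nsmul
          intro m hm
          rw [Finset.mem_Ioc] at hm
          exact he m (by omega)
      _ ≤ (n:ℝ) * ε := by
          rw [Nat.card_Ioc, nsmul_eq_mul]
          apply mul_le_mul_of_nonneg_right _ hε
          exact_mod_cast Nat.sub_le n (min M n)
  calc ‖(n:ℂ)⁻¹ * ∑ m ∈ Finset.Icc 1 n, (u m - L)‖
      = (n:ℝ)⁻¹ * ‖∑ m ∈ Finset.Icc 1 n, (u m - L)‖ := by
        rw [norm_mul, norm_inv, Complex.norm_natCast]
    _ ≤ (n:ℝ)⁻¹ * (M * B + n * ε) := by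
        apply mul_le_mul_of_nonneg_left _ (by positivity)
        rw [hIcc, ← hsplit]
        exact le_trans (norm_add_le _ _) (add_le_add h1 h2)
    _ = M * B / n + ε := by field_simp

private lemma cesaro_tendsto' (u : ℕ → ℂ) (L : ℂ) (B : ℝ) (hb : ∀ m, ‖u m - L‖ ≤ B)
    (h : Tendsto u atTop (𝓝 L)) :
    Tendsto (fun n : ℕ => (n:ℂ)⁻¹ * ∑ m ∈ Finset.Icc 1 n, u m) atTop (𝓝 L) := by
  rw [Metric.tendsto_atTop]
  intro ε hε
  obtain ⟨M, hM⟩ := (Metric.tendsto_atTop.mp h) (ε/4) (by linarith)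
  have hMd : Tendsto (fun n : ℕ => (M:ℝ) * B / n) atTop (𝓝 0) :=
    tendsto_const_div_atTop_nhds_zero_nat _
  obtain ⟨N₀, hN₀⟩ := (Metric.tendsto_atTop.mp hMd) (ε/4) (by linarith)
  refine ⟨max 1 N₀, fun n hn => ?_⟩
  have hn1 : 1 ≤ n := le_trans (le_max_left _ _) hn
  have hb2 : ∀ m, M ≤ m → ‖u m - L‖ ≤ ε/4 := by
    intro m hm
    have := hM m hm; rw [dist_eq_norm] at this; linarith
  have hkey := cesaro_bound' u L B (ε/4) M hb hb2 (by linarith) n hn1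
  rw [dist_eq_norm]
  have h4 := hN₀ n (le_trans (le_max_right _ _) hn)
  rw [Real.dist_eq, sub_zero] at h4
  have h5 : (M:ℝ) * B / n < ε/4 := lt_of_abs_lt h4
  linarith

private lemma re_bound' (w z₀ : ℂ) (hw : ‖w‖ ≤ 1) (hz : ‖z₀‖ = 1) (δ : ℝ)
    (hδ : 0 ≤ δ) (hd : δ ≤ ‖w - z₀‖) : (w * (starRingEnd ℂ) z₀).re ≤ 1 - δ^2/2 := by
  have e1 : ‖w‖^2 = w.re^2 + w.im^2 := by
    rw [Complex.sq_norm, Complex.normSq_apply]; ring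
  have e2 : ‖z₀‖^2 = z₀.re^2 + z₀.im^2 := by
    rw [Complex.sq_norm, Complex.normSq_apply]; ring
  have e3 : ‖w - z₀‖^2 = (w.re - z₀.re)^2 + (w.im - z₀.im)^2 := by
    rw [Complex.sq_norm, Complex.normSq_apply]
    simp [Complex.sub_re, Complex.sub_im]; ring
  have h1 : w.re^2 + w.im^2 ≤ 1 := by
    rw [← e1]; nlinarith [norm_nonneg w]
  have h2 : z₀.re^2 + z₀.im^2 = 1 := by rw [← e2, hz]; norm_num
  have h3 : δ^2 ≤ (w.re - z₀.re)^2 + (w.im - z₀.im)^2 := by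
    rw [← e3]; nlinarith [norm_nonneg (w - z₀)]
  have e4 : (w * (starRingEnd ℂ) z₀).re = w.re * z₀.re + w.im * z₀.im := by
    simp [Complex.mul_re, Complex.conj_re, Complex.conj_im]
  rw [e4]; nlinarith


/-- **Hyperbolic symbol, holomorphic near the Denjoy–Wolff point.** Let `φ ∈ A(𝔻)` map `𝔻̄`
into `𝔻̄` with Denjoy–Wolff point `z₀ ∈ ∂𝔻`, and suppose `φ` extends holomorphically to a
neighborhood of `z₀` with `φ(z₀) = z₀` and `|φ'(z₀)| < 1`. Then `C_φ : A(𝔻) → A(𝔻)` is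
mean ergodic if and only if `φ^n(z) → z₀` for every `z ∈ 𝔻̄`. -/
theorem stmt_12 (φ : ℂ → ℂ) (hφa : IsDiscAlg φ)
    (hφm : MapsTo φ (closedBall (0:ℂ) 1) (closedBall (0:ℂ) 1))
    (hφb : MapsTo φ (ball (0:ℂ) 1) (ball (0:ℂ) 1))
    (z₀ : ℂ) (hz₀ : ‖z₀‖ = 1)
    (hDW : TendstoLocallyUniformlyOn (fun (n : ℕ) (z : ℂ) => φ^[n] z) (fun _ => z₀)
      atTop (ball (0:ℂ) 1))
    (hfix : φ z₀ = z₀)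
    (hext : ∃ r > (0:ℝ), ∃ ψ : ℂ → ℂ, DifferentiableOn ℂ ψ (ball z₀ r) ∧
      EqOn ψ φ (ball z₀ r ∩ closedBall (0:ℂ) 1) ∧ ψ z₀ = z₀ ∧ ‖deriv ψ z₀‖ < 1) :
    MeanErgodicDiscAlg φ ↔
      ∀ z ∈ closedBall (0:ℂ) 1, Tendsto (fun n : ℕ => φ^[n] z) atTop (𝓝 z₀) := by
  obtain ⟨r, hr, ψ, hψd, hψeq, hψfix, hψder⟩ := hext
  set K := closedBall (0:ℂ) 1 with hKdef
  set c : ℝ := (‖deriv ψ z₀‖ + 1)/2 with hcdef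
  have hc0 : 0 ≤ c := by rw [hcdef]; positivity
  have hc1 : c < 1 := by rw [hcdef]; linarith
  have hcd : ‖deriv ψ z₀‖ < c := by rw [hcdef]; linarith
  have hda : HasDerivAt ψ (deriv ψ z₀) z₀ :=
    (hψd.differentiableAt (isOpen_ball.mem_nhds (mem_ball_self hr))).hasDerivAt
  have hlo := hasDerivAt_iff_isLittleO.mp hda
  have hev := hlo.def (show (0:ℝ) < c - ‖deriv ψ z₀‖ by linarith)
  rw [Metric.eventually_nhds_iff] at hev
  obtain ⟨δ₀, hδ₀, hball⟩ := hev
  set δ := min δ₀ r with hδdef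
  have hδpos : 0 < δ := lt_min hδ₀ hr
  have hδr : δ ≤ r := min_le_right _ _
  have hz₀K : z₀ ∈ K := mem_closedBall_zero_iff.mpr (le_of_eq hz₀)
  have step : ∀ w ∈ K, ‖w - z₀‖ < δ → φ w ∈ K ∧ ‖φ w - z₀‖ ≤ c * ‖w - z₀‖ := by
    intro w hw hwd
    have hwr : w ∈ ball z₀ r := by
      rw [mem_ball, dist_eq_norm]; exact lt_of_lt_of_le hwd hδr
    have heq : ψ w = φ w := hψeq ⟨hwr, hw⟩
    have hwδ : dist w z₀ < δ₀ := by
      rw [dist_eq_norm]; exact lt_of_lt_of_le hwd (min_le_left _ _)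
    have hb := hball hwδ
    refine ⟨hφm hw, ?_⟩
    rw [← heq]
    have hsplit : ψ w - z₀ = (ψ w - ψ z₀ - (w - z₀) • deriv ψ z₀) + (w - z₀) • deriv ψ z₀ := by
      rw [hψfix, smul_eq_mul]; ring
    calc ‖ψ w - z₀‖ ≤ ‖ψ w - ψ z₀ - (w - z₀) • deriv ψ z₀‖ + ‖(w - z₀) • deriv ψ z₀‖ := by
          rw [hsplit]; exact norm_add_le _ _
      _ ≤ (c - ‖deriv ψ z₀‖) * ‖w - z₀‖ + ‖w - z₀‖ * ‖deriv ψ z₀‖ := by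
          apply add_le_add hb
          rw [norm_smul]
      _ = c * ‖w - z₀‖ := by ring
  have iter : ∀ k, ∀ w ∈ K, ‖w - z₀‖ < δ →
      φ^[k] w ∈ K ∧ ‖φ^[k] w - z₀‖ ≤ c^k * ‖w - z₀‖ := by
    intro k
    induction k with
    | zero => intro w hw hwd; simpa using hw
    | succ k ih =>
      intro w hw hwd
      obtain ⟨h1, h2⟩ := step w hw hwd
      have hle : c * ‖w - z₀‖ ≤ ‖w - z₀‖ := by
        nlinarith [norm_nonneg (w - z₀)]
      have hφwd : ‖φ w - z₀‖ < δ := lt_of_le_of_lt (le_trans h2 hle) hwd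
      obtain ⟨g1, g2⟩ := ih (φ w) h1 hφwd
      rw [Function.iterate_succ_apply]
      refine ⟨g1, le_trans g2 ?_⟩
      calc c^k * ‖φ w - z₀‖ ≤ c^k * (c * ‖w - z₀‖) :=
            mul_le_mul_of_nonneg_left h2 (pow_nonneg hc0 k)
        _ = c^(k+1) * ‖w - z₀‖ := by ring
  have iterK : ∀ k, MapsTo (φ^[k]) K K := fun k => hφm.iterate k
  have contφ : ContinuousOn φ K := hφa.1
  have contIter : ∀ k, ContinuousOn (φ^[k]) K := by
    intro k; induction k with
    | zero => rw [Function.iterate_zero]; exact continuousOn_id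
    | succ k ih =>
      rw [Function.iterate_succ]
      exact ih.comp contφ hφm
  have conv_of_in : ∀ w ∈ K, ‖w - z₀‖ < δ → Tendsto (fun j => φ^[j] w) atTop (𝓝 z₀) := by
    intro w hw hwd
    rw [tendsto_iff_dist_tendsto_zero]
    have hbnd : ∀ j : ℕ, dist (φ^[j] w) z₀ ≤ c^j * ‖w - z₀‖ := by
      intro j; rw [dist_eq_norm]; exact (iter j w hw hwd).2
    have ht : Tendsto (fun j : ℕ => c^j * ‖w - z₀‖) atTop (𝓝 0) := by
      have := (tendsto_pow_atTop_nhds_zero_of_lt_one hc0 hc1).mul_const ‖w - z₀‖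
      simpa using this
    exact squeeze_zero (fun j => dist_nonneg) hbnd ht
  constructor
  · intro hme z hz
    obtain ⟨g, hg⟩ := hme id ⟨continuousOn_id, differentiableOn_id⟩
    have hcesb : ∀ w ∈ ball (0:ℂ) 1, Tendsto (fun n => cesaro φ id n w) atTop (𝓝 z₀) := by
      intro w hw
      have hw' : w ∈ K := ball_subset_closedBall hw
      have hbd : ∀ m, ‖(φ^[m] w : ℂ) - z₀‖ ≤ 2 := by
        intro m
        calc ‖φ^[m] w - z₀‖ ≤ ‖φ^[m] w‖ + ‖z₀‖ := norm_sub_le _ _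
          _ ≤ 2 := by
            have := mem_closedBall_zero_iff.mp (iterK m hw')
            rw [hz₀]; linarith
      have := cesaro_tendsto' (fun m => φ^[m] w) z₀ 2 hbd (hDW.tendsto_at hw)
      simpa [cesaro] using this
    have hgball : ∀ w ∈ ball (0:ℂ) 1, g w = z₀ := fun w hw =>
      tendsto_nhds_unique (hg.tendsto_at (ball_subset_closedBall hw)) (hcesb w hw)
    have hcescont : ∀ n, ContinuousOn (cesaro φ id n) K := by
      intro n
      show ContinuousOn (fun z => (n:ℂ)⁻¹ * ∑ m ∈ Finset.Icc 1 n, id (φ^[m] z)) K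
      simp only [id_eq]
      exact continuousOn_const.mul
        (continuousOn_finset_sum _ (fun m _ => contIter m))
    have hgcont : ContinuousOn g K :=
      hg.continuousOn (Eventually.of_forall hcescont).frequently
    have hgK : ∀ w ∈ K, g w = z₀ := by
      intro w hw
      have hcl : w ∈ closure (ball (0:ℂ) 1) := by
        rw [closure_ball (0:ℂ) one_ne_zero]; exact hw
      haveI := mem_closure_iff_nhdsWithin_neBot.mp hcl
      have h1 : Tendsto g (𝓝[ball (0:ℂ) 1] w) (𝓝 (g w)) :=
        (hgcont w hw).mono ball_subset_closedBall
      have h2 : Tendsto g (𝓝[ball (0:ℂ) 1] w) (𝓝 z₀) := by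
        apply Tendsto.congr' _ tendsto_const_nhds
        filter_upwards [self_mem_nhdsWithin] with x hx
        exact (hgball x hx).symm
      exact tendsto_nhds_unique h1 h2
    have hcz : Tendsto (fun n => cesaro φ id n z) atTop (𝓝 z₀) := by
      have := hg.tendsto_at hz; rwa [hgK z hz] at this
    have hk : ∃ k, ‖φ^[k] z - z₀‖ < δ := by
      by_contra hcon
      push_neg at hcon
      have hre : ∀ n, 1 ≤ n → ((cesaro φ id n z) * (starRingEnd ℂ) z₀).re ≤ 1 - δ^2/2 := by
        intro n hn
        have hn0 : (0:ℝ) < n := by exact_mod_cast hn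
        have hterm : ∀ m ∈ Finset.Icc 1 n, ((φ^[m] z) * (starRingEnd ℂ) z₀).re ≤ 1 - δ^2/2 := by
          intro m _
          exact re_bound' _ _ (mem_closedBall_zero_iff.mp (iterK m hz)) hz₀ δ hδpos.le (hcon m)
        have hre1 : ((cesaro φ id n z) * (starRingEnd ℂ) z₀).re
            = (n:ℝ)⁻¹ * ∑ m ∈ Finset.Icc 1 n, ((φ^[m] z) * (starRingEnd ℂ) z₀).re := by
          simp only [cesaro, id_eq]
          rw [mul_assoc, Finset.sum_mul, show ((n:ℂ)⁻¹) = (((n:ℝ)⁻¹ : ℝ) : ℂ) by push_cast; rfl]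
          rw [Complex.re_ofReal_mul, Complex.re_sum]
        rw [hre1]
        calc (n:ℝ)⁻¹ * ∑ m ∈ Finset.Icc 1 n, ((φ^[m] z) * (starRingEnd ℂ) z₀).re
            ≤ (n:ℝ)⁻¹ * ((Finset.Icc 1 n).card • (1 - δ^2/2)) := by
              apply mul_le_mul_of_nonneg_left (Finset.sum_le_card_nsmul _ _ _ hterm) (by positivity)
          _ = 1 - δ^2/2 := by
              rw [Nat.card_Icc, Nat.add_sub_cancel, nsmul_eq_mul]
              field_simp
      have hlim : Tendsto (fun n => ((cesaro φ id n z) * (starRingEnd ℂ) z₀).re) atTop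
          (𝓝 ((z₀ * (starRingEnd ℂ) z₀).re)) :=
        (Complex.continuous_re.tendsto _).comp (hcz.mul_const _)
      have h1 : (z₀ * (starRingEnd ℂ) z₀).re = 1 := by
        rw [Complex.mul_conj]
        simp [Complex.normSq_eq_norm_sq, hz₀]
      have hle : (z₀ * (starRingEnd ℂ) z₀).re ≤ 1 - δ^2/2 :=
        le_of_tendsto hlim (eventually_atTop.2 ⟨1, fun n hn => hre n hn⟩)
      rw [h1] at hle; nlinarith
    obtain ⟨k, hk⟩ := hk
    rw [← tendsto_add_atTop_iff_nat k]
    have heq : ∀ j, φ^[j + k] z = φ^[j] (φ^[k] z) := fun j => Function.iterate_add_apply φ j k z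
    simp only [heq]
    exact conv_of_in (φ^[k] z) (iterK k hz) hk
  · intro h f hf
    refine ⟨fun _ => f z₀, ?_⟩
    have key : ∃ N, ∀ z ∈ K, ‖φ^[N] z - z₀‖ < δ := by
      by_contra hcon
      push_neg at hcon
      choose zs hzs hzd using hcon
      obtain ⟨w, hwK, σ, hσ, hσt⟩ := (isCompact_closedBall (0:ℂ) 1).tendsto_subseq hzs
      have claim : ∀ N k, k ≤ N → δ ≤ ‖φ^[k] (zs N) - z₀‖ := by
        intro N k hkN
        by_contra hlt
        push_neg at hlt
        have h2 := (iter (N - k) (φ^[k] (zs N)) (iterK k (hzs N)) hlt).2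
        have h3 : φ^[N - k] (φ^[k] (zs N)) = φ^[N] (zs N) := by
          rw [← Function.iterate_add_apply, Nat.sub_add_cancel hkN]
        rw [h3] at h2
        have hpow : c^(N-k) ≤ 1 := pow_le_one₀ hc0 hc1.le
        have h4 : c^(N-k) * ‖φ^[k] (zs N) - z₀‖ < δ := by
          nlinarith [norm_nonneg (φ^[k] (zs N) - z₀), pow_nonneg hc0 (N-k)]
        linarith [hzd N, le_trans h2 h4.le]
      have hwlim : ∀ k, δ ≤ ‖φ^[k] w - z₀‖ := by
        intro k
        have htend : Tendsto (fun j => φ^[k] (zs (σ j))) atTop (𝓝 (φ^[k] w)) := by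
          apply Tendsto.comp ((contIter k) w hwK)
          exact tendsto_nhdsWithin_iff.mpr ⟨hσt, Eventually.of_forall (fun j => hzs (σ j))⟩
        have hnorm : Tendsto (fun j => ‖φ^[k] (zs (σ j)) - z₀‖) atTop
            (𝓝 ‖φ^[k] w - z₀‖) := (htend.sub tendsto_const_nhds).norm
        apply ge_of_tendsto hnorm
        filter_upwards [eventually_ge_atTop k] with j hj
        exact claim (σ j) k (le_trans hj (hσ.le_apply))
      obtain ⟨k, hk'⟩ := (Metric.tendsto_atTop.mp (h w hwK)) δ hδpos
      have := hk' k le_rfl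
      rw [dist_eq_norm] at this
      linarith [hwlim k]
    obtain ⟨N, hN⟩ := key
    have unif : ∀ ρ : ℝ, 0 < ρ → ∃ N', ∀ n, N' ≤ n → ∀ z ∈ K, ‖φ^[n] z - z₀‖ < ρ := by
      intro ρ hρ
      obtain ⟨j₀, hj₀⟩ := (Metric.tendsto_atTop.mp
        ((tendsto_pow_atTop_nhds_zero_of_lt_one hc0 hc1).mul_const δ)) ρ hρ
      refine ⟨N + j₀, fun n hn z hz => ?_⟩
      have h1 : φ^[n] z = φ^[n - N] (φ^[N] z) := by
        rw [← Function.iterate_add_apply, Nat.sub_add_cancel (by omega)]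
      rw [h1]
      have h2 := (iter (n - N) (φ^[N] z) (iterK N hz) (hN z hz)).2
      have h3 : c^(n-N) * ‖φ^[N] z - z₀‖ ≤ c^(n-N) * δ :=
        mul_le_mul_of_nonneg_left (hN z hz).le (pow_nonneg hc0 _)
      have h4 := hj₀ (n - N) (by omega)
      rw [Real.dist_eq, zero_mul, sub_zero] at h4
      have h5 : c^(n-N) * δ < ρ := lt_of_abs_lt h4
      linarith
    obtain ⟨B₀, hB₀⟩ := (isCompact_closedBall (0:ℂ) 1).exists_bound_of_continuousOn hf.1
    have hB₀0 : 0 ≤ B₀ := le_trans (norm_nonneg _) (hB₀ z₀ hz₀K)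
    have hfu := (isCompact_closedBall (0:ℂ) 1).uniformContinuousOn_of_continuous hf.1
    rw [Metric.uniformContinuousOn_iff] at hfu
    rw [Metric.tendstoUniformlyOn_iff]
    intro ε hε
    obtain ⟨ρ, hρ, hfρ⟩ := hfu (ε/4) (by linarith)
    obtain ⟨N₁, hN₁⟩ := unif ρ hρ
    have hMd : Tendsto (fun n : ℕ => (N₁:ℝ) * (2*B₀+2) / n) atTop (𝓝 0) :=
      tendsto_const_div_atTop_nhds_zero_nat _
    have hev1 : ∀ᶠ n : ℕ in atTop, (N₁:ℝ) * (2*B₀+2) / n < ε/4 :=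
      hMd.eventually (gt_mem_nhds (by linarith))
    filter_upwards [eventually_ge_atTop 1, hev1] with n hn1 hn2
    intro x hx
    rw [dist_eq_norm, norm_sub_rev]
    have hb : ∀ m, ‖f (φ^[m] x) - f z₀‖ ≤ 2*B₀+2 := by
      intro m
      have h1 := hB₀ _ (iterK m hx)
      have h2 := hB₀ z₀ hz₀K
      calc ‖f (φ^[m] x) - f z₀‖ ≤ ‖f (φ^[m] x)‖ + ‖f z₀‖ := norm_sub_le _ _
        _ ≤ 2*B₀+2 := by linarith
    have he : ∀ m, N₁ ≤ m → ‖f (φ^[m] x) - f z₀‖ ≤ ε/4 := by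
      intro m hm
      have hd : dist (φ^[m] x) z₀ < ρ := by
        rw [dist_eq_norm]; exact hN₁ m hm x hx
      have := hfρ (φ^[m] x) (iterK m hx) z₀ hz₀K hd
      rw [dist_eq_norm] at this; linarith
    have hkey := cesaro_bound' (fun m => f (φ^[m] x)) (f z₀) (2*B₀+2) (ε/4) N₁ hb he
      (by linarith) n hn1
    calc ‖cesaro φ f n x - f z₀‖
        = ‖(n:ℂ)⁻¹ * ∑ m ∈ Finset.Icc 1 n, (fun m => f (φ^[m] x)) m - f z₀‖ := rfl
      _ ≤ (N₁:ℝ)*(2*B₀+2)/n + ε/4 := hkey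
      _ < ε := by linarith
end
end

section
/- Let v be a typical weight on 𝔻 and let λ ∈ ℂ with |λ| = 1 be a root of unity, with k the smallest positive integer such that λ^k = 1. Consider the symbol φ(z) = λz. Then the composition operator C_φ is power bounded and uniformly mean ergodic on H_v^∞, and for every f ∈ H_v^∞ the Cesàro means (C_φ)_[n] f converge in ‖·‖_v to the function z ↦ (1/k) Σ_{m=0}^{k−1} f(λ^m z). -/
open Metric Set Filter Complex
open scoped Topology Classical

noncomputable section

lemma rot_iter (lam z : ℂ) (m : ℕ) : (fun w => lam * w)^[m] z = lam ^ m * z := by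
  induction m with
  | zero => simp
  | succ m ih => rw [Function.iterate_succ_apply', ih, pow_succ]; ring

lemma rot_mem_ball {lam z : ℂ} (hlam : ‖lam‖ = 1) (hz : z ∈ ball (0:ℂ) 1) (m : ℕ) :
    lam ^ m * z ∈ ball (0:ℂ) 1 := by
  simpa [norm_mul, norm_pow, hlam] using hz

lemma rot_vbound {v : ℂ → ℝ} (hv : IsTypicalWeight v) {lam z : ℂ} (hlam : ‖lam‖ = 1)
    (hz : z ∈ ball (0:ℂ) 1) {f : ℂ → ℂ} {M : ℝ}
    (hM : ∀ z ∈ ball (0:ℂ) 1, v z * ‖f z‖ ≤ M) (m : ℕ) :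
    v z * ‖f (lam ^ m * z)‖ ≤ M := by
  have hmem := rot_mem_ball hlam hz m
  have hrad : v z = v (lam ^ m * z) := by
    refine hv.2.2.2.1 z hz _ hmem ?_
    simp [norm_mul, norm_pow, hlam]
  rw [hrad]
  exact hM _ hmem

/-- Core estimate: for `f` in the ball of radius `M` of `H_v^∞`, the Cesàro means
are within `2kM/n` of the limit. -/
lemma key_bound (v : ℂ → ℝ) (hv : IsTypicalWeight v)
    (lam : ℂ) (hlam : ‖lam‖ = 1) (k : ℕ) (hk : 0 < k) (hroot : lam ^ k = 1)
    (f : ℂ → ℂ) (M : ℝ) (hM : ∀ z ∈ ball (0:ℂ) 1, v z * ‖f z‖ ≤ M)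
    (n : ℕ) (hn : 0 < n) (z : ℂ) (hz : z ∈ ball (0:ℂ) 1) :
    v z * ‖cesaro (fun w => lam * w) f n z
      - (k : ℂ)⁻¹ * ∑ m ∈ Finset.range k, f (lam ^ m * z)‖ ≤ 2 * k * M / n := by
  have hM0 : 0 ≤ M :=
    le_trans (mul_nonneg (hv.2.1 0 (by simp)).le (norm_nonneg _)) (hM 0 (by simp))
  have hv0 : 0 ≤ v z := le_of_lt (hv.2.1 z hz)
  set b : ℕ → ℂ := fun i => f (lam ^ (i + 1) * z) with hb_def
  set S : ℂ := ∑ m ∈ Finset.range k, f (lam ^ m * z) with hS_def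
  -- periodicity of b
  have hb : ∀ i, b (i + k) = b i := by
    intro i
    have : lam ^ (i + k + 1) = lam ^ (i + 1) := by
      rw [show i + k + 1 = (i + 1) + k by omega, pow_add, hroot, mul_one]
    simp [hb_def, this]
  have hbq : ∀ q i, b (i + q * k) = b i := by
    intro q
    induction q with
    | zero => simp
    | succ q ih => intro i; rw [show i + (q+1)*k = (i + k) + q * k by ring, ih, hb]
  -- sum of b over one period equals S
  have hSb : ∑ i ∈ Finset.range k, b i = S := by
    have h1 := Finset.sum_range_succ' (fun m => f (lam ^ m * z)) k
    have h2 := Finset.sum_range_succ (fun m => f (lam ^ m * z)) k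
    have hgk : f (lam ^ k * z) = f (lam ^ 0 * z) := by rw [hroot, pow_zero]
    have : (∑ i ∈ Finset.range k, b i) + f (lam ^ 0 * z)
        = S + f (lam ^ k * z) := by
      rw [hS_def, ← h2, h1]
    rw [hgk] at this
    exact add_right_cancel this
  -- block sums
  have hblock : ∀ q : ℕ, ∑ i ∈ Finset.range (q * k), b i = (q : ℂ) * S := by
    intro q
    induction q with
    | zero => simp
    | succ q ih =>
      rw [show (q+1)*k = q*k + k by ring, Finset.sum_range_add, ih]
      have : ∀ i ∈ Finset.range k, b (q * k + i) = b i := by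
        intro i _; rw [add_comm, hbq]
      rw [Finset.sum_congr rfl this, hSb]
      push_cast; ring
  set q : ℕ := n / k with hq_def
  set r : ℕ := n % k with hr_def
  have hnqr : q * k + r = n := by rw [hq_def, hr_def, mul_comm]; exact Nat.div_add_mod n k
  have hrk : r < k := Nat.mod_lt _ hk
  set T : ℂ := ∑ i ∈ Finset.range r, b (q * k + i) with hT_def
  -- rewrite the Cesàro sum
  have hces : cesaro (fun w => lam * w) f n z = (n : ℂ)⁻¹ * ((q : ℂ) * S + T) := by
    unfold cesaro
    congr 1
    have h1 : ∀ m ∈ Finset.Icc 1 n, f ((fun w => lam * w)^[m] z) = f (lam ^ m * z) := by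
      intro m _; rw [rot_iter]
    rw [Finset.sum_congr rfl h1, ← Finset.Ico_add_one_right_eq_Icc, Finset.sum_Ico_eq_sum_range,
      show n + 1 - 1 = n from rfl]
    have h2 : ∀ i ∈ Finset.range n, f (lam ^ (1 + i) * z) = b i := by
      intro i _; rw [add_comm 1 i]
    rw [Finset.sum_congr rfl h2, ← hnqr, Finset.sum_range_add, hblock]
  -- norm bounds on S and T
  have hterm : ∀ m : ℕ, v z * ‖f (lam ^ m * z)‖ ≤ M := rot_vbound hv hlam hz hM
  have hsum_bound : ∀ (s : Finset ℕ) (g : ℕ → ℕ),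
      v z * ‖∑ i ∈ s, b (g i)‖ ≤ s.card * M := by
    intro s g
    calc v z * ‖∑ i ∈ s, b (g i)‖ ≤ v z * ∑ i ∈ s, ‖b (g i)‖ := by
          exact mul_le_mul_of_nonneg_left (norm_sum_le _ _) hv0
      _ = ∑ i ∈ s, v z * ‖b (g i)‖ := Finset.mul_sum _ _ _
      _ ≤ ∑ i ∈ s, M := Finset.sum_le_sum (fun i _ => hterm (g i + 1))
      _ = s.card * M := by rw [Finset.sum_const, nsmul_eq_mul]
  have hS_bound : v z * ‖S‖ ≤ k * M := by
    have := hsum_bound (Finset.range k) (fun i => i)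
    rw [hSb] at this; simpa using this
  have hT_bound : v z * ‖T‖ ≤ r * M := by
    have := hsum_bound (Finset.range r) (fun i => q * k + i)
    simpa [hT_def] using this
  -- the difference
  have hn0 : (n : ℂ) ≠ 0 := Nat.cast_ne_zero.mpr hn.ne'
  have hk0 : (k : ℂ) ≠ 0 := Nat.cast_ne_zero.mpr hk.ne'
  have hncast : (q : ℂ) * k + r = n := by exact_mod_cast congrArg (Nat.cast : ℕ → ℂ) hnqr
  have hdiff : cesaro (fun w => lam * w) f n z - (k : ℂ)⁻¹ * S
      = (-(r : ℂ) / ((n : ℂ) * k)) * S + (n : ℂ)⁻¹ * T := by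
    have hsc : (n : ℂ)⁻¹ * q - (k : ℂ)⁻¹ = -(r : ℂ) / ((n : ℂ) * k) := by
      field_simp
      linear_combination hncast
    rw [hces]
    linear_combination S * hsc
  have hnorm : ‖(-(r : ℂ) / ((n : ℂ) * k))‖ = (r : ℝ) / (n * k) := by
    rw [norm_div, norm_neg, norm_mul]
    simp [RCLike.norm_natCast]
  have hnr : (0:ℝ) < n := by exact_mod_cast hn
  have hkr : (0:ℝ) < k := by exact_mod_cast hk
  calc v z * ‖cesaro (fun w => lam * w) f n z - (k : ℂ)⁻¹ * S‖
      ≤ v z * (‖(-(r : ℂ) / ((n : ℂ) * k)) * S‖ + ‖(n : ℂ)⁻¹ * T‖) := by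
        rw [hdiff]; exact mul_le_mul_of_nonneg_left (norm_add_le _ _) hv0
    _ = ((r : ℝ) / (n * k)) * (v z * ‖S‖) + ((n : ℝ))⁻¹ * (v z * ‖T‖) := by
        rw [norm_mul, norm_mul, hnorm, norm_inv, Complex.norm_natCast]; ring
    _ ≤ ((r : ℝ) / (n * k)) * (k * M) + ((n : ℝ))⁻¹ * (r * M) := by
        gcongr <;> positivity
    _ ≤ 2 * k * M / n := by
        have hrle : (r : ℝ) ≤ k := by exact_mod_cast hrk.le
        have h1 : (r : ℝ) / (n * k) * (k * M) = r * M / n := by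
          field_simp
        have h2 : ((n:ℝ))⁻¹ * (r * M) = r * M / n := inv_mul_eq_div _ _
        rw [h1, h2, ← add_div, div_le_div_iff₀ hnr hnr]
        nlinarith [mul_nonneg (mul_nonneg (sub_nonneg.mpr hrle) hM0) hnr.le]
  
/-- **Rotation symbol on `H_v^∞`, root-of-unity case.** Let `v` be a typical weight and
`λ` a root of unity with `|λ| = 1`, with minimal period `k`. Then for `φ(z) = λz` the
composition operator `C_φ` is power bounded and uniformly mean ergodic on `H_v^∞`, and for
every `f ∈ H_v^∞` its Cesàro means converge in `‖·‖_v` to `z ↦ (1/k) ∑_{m=0}^{k-1} f(λ^m z)`. -/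
theorem stmt_17 (v : ℂ → ℝ) (hv : IsTypicalWeight v)
    (lam : ℂ) (hlam : ‖lam‖ = 1) (k : ℕ) (hk : 0 < k) (hroot : lam ^ k = 1)
    (hmin : ∀ j : ℕ, 0 < j → j < k → lam ^ j ≠ 1) :
    -- power bounded
    (∃ M : ℝ, ∀ n : ℕ, ∀ f : ℂ → ℂ, IsHvInf v f →
      (∀ z ∈ ball (0:ℂ) 1, v z * ‖f z‖ ≤ 1) →
      ∀ z ∈ ball (0:ℂ) 1, v z * ‖f ((fun w => lam * w)^[n] z)‖ ≤ M) ∧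
    -- uniformly mean ergodic with the stated limit
    (∀ ε > (0:ℝ), ∃ N : ℕ, ∀ n ≥ N, ∀ f : ℂ → ℂ, IsHvInf v f →
      (∀ z ∈ ball (0:ℂ) 1, v z * ‖f z‖ ≤ 1) → ∀ z ∈ ball (0:ℂ) 1,
        v z * ‖cesaro (fun w => lam * w) f n z
          - (k : ℂ)⁻¹ * ∑ m ∈ Finset.range k, f (lam ^ m * z)‖ ≤ ε) ∧
    -- convergence of the Cesàro means in `‖·‖_v` for every `f ∈ H_v^∞`
    (∀ f : ℂ → ℂ, IsHvInf v f → ∀ ε > (0:ℝ), ∃ N : ℕ, ∀ n ≥ N, ∀ z ∈ ball (0:ℂ) 1,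
      v z * ‖cesaro (fun w => lam * w) f n z
        - (k : ℂ)⁻¹ * ∑ m ∈ Finset.range k, f (lam ^ m * z)‖ ≤ ε) := by
  have hEv : ∀ C : ℝ, 0 ≤ C → ∀ ε > (0:ℝ), ∃ N : ℕ, 0 < N ∧ ∀ n ≥ N, C / n ≤ ε := by
    intro C hC ε hε
    refine ⟨max 1 ⌈C / ε⌉₊, lt_of_lt_of_le one_pos (le_max_left _ _), fun n hn => ?_⟩
    have hn1 : (1:ℕ) ≤ n := le_trans (le_max_left _ _) hn
    have hnr : (0:ℝ) < n := by exact_mod_cast hn1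
    rw [div_le_iff₀ hnr]
    calc C = ε * (C / ε) := by field_simp
      _ ≤ ε * (⌈C / ε⌉₊ : ℝ) := by
          exact mul_le_mul_of_nonneg_left (Nat.le_ceil _) hε.le
      _ ≤ ε * n := by
          gcongr
          exact_mod_cast le_trans (le_max_right _ _) hn
  have hMnn : ∀ (f : ℂ → ℂ) (M : ℝ), (∀ z ∈ ball (0:ℂ) 1, v z * ‖f z‖ ≤ M) → 0 ≤ M := by
    intro f M hM
    exact le_trans (mul_nonneg (hv.2.1 0 (by simp)).le (norm_nonneg _)) (hM 0 (by simp))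
  refine ⟨⟨1, fun n f hf hb z hz => ?_⟩, fun ε hε => ?_, fun f hf ε hε => ?_⟩
  · rw [rot_iter]
    exact rot_vbound hv hlam hz hb n
  · obtain ⟨N, hN0, hN⟩ := hEv (2 * k * 1) (by positivity) ε hε
    refine ⟨N, fun n hn f hf hb z hz => ?_⟩
    exact le_trans
      (key_bound v hv lam hlam k hk hroot f 1 hb n (lt_of_lt_of_le hN0 hn) z hz)
      (hN n hn)
  · obtain ⟨M, hM⟩ := hf.2
    have hM0 : 0 ≤ M := hMnn f M hM
    obtain ⟨N, hN0, hN⟩ := hEv (2 * k * M) (by positivity) ε hε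
    refine ⟨N, fun n hn z hz => ?_⟩
    exact le_trans
      (key_bound v hv lam hlam k hk hroot f M hM n (lt_of_lt_of_le hN0 hn) z hz)
      (hN n hn)
end
end
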